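/- arXiv:2406.02108 — 2 statements merged into one kernel-verified Lean document; each statement's English description precedes it below -/
import Mathlib

section
/- Let τ be a finite monadic vocabulary, d a positive integer, and M any τ-model of size n. Then C_d(M) ≤ 6d − 3 + c_τ. -/
/-!
Common definitions: unary (monadic) first-order structures, FO[τ] formulas in
negation normal form, formula size / quantifier rank / number of quantifiers,
semantics, description complexity, the equivalence `≡_d`, and the entropies.
-/

open Filter

/-- A `τ`-model of size `n`: each point of the domain `{1,…,n}` (modelled as `Fin n`)
is assigned its `τ`-type, i.e. the set of unary predicates of `τ` that hold at it.
This is exactly the data of a structure `(M, P₁^M, …, P_k^M)` with `P_i^M ⊆ M`. -/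
abbrev UModel (τ : Type) (n : ℕ) := Fin n → Set τ

/-- `|π|_M`: the number of points of `M` realizing the `τ`-type `π`. -/
noncomputable def typeCount {τ : Type} {n : ℕ} (M : UModel τ n) (π : Set τ) : ℕ :=
  Set.ncard {a : Fin n | M a = π}

/-- FO[τ] formulas in negation normal form: atomic formulas are `x = y`, `x ≠ y`,
`P(x)` and `¬P(x)`; the connectives are `∧`, `∨` and the quantifiers `∃`, `∀`.
Variables are indexed by natural numbers. -/
inductive FO (τ : Type) : Type
  | eq : ℕ → ℕ → FO τ
  | ne : ℕ → ℕ → FO τ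
  | pos : τ → ℕ → FO τ
  | npos : τ → ℕ → FO τ
  | and : FO τ → FO τ → FO τ
  | or : FO τ → FO τ → FO τ
  | ex : ℕ → FO τ → FO τ
  | all : ℕ → FO τ → FO τ

namespace FO

variable {τ : Type}

/-- The size of a formula: the number of atomic formulas, binary connectives
(`∧`, `∨`) and quantifiers occurring in it. -/
def size : FO τ → ℕ
  | eq _ _ => 1
  | ne _ _ => 1
  | pos _ _ => 1
  | npos _ _ => 1
  | and φ ψ => φ.size + ψ.size + 1
  | or φ ψ => φ.size + ψ.size + 1
  | ex _ φ => φ.size + 1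
  | all _ φ => φ.size + 1

/-- The quantifier rank: the maximum number of nested quantifiers. -/
def qrank : FO τ → ℕ
  | eq _ _ => 0
  | ne _ _ => 0
  | pos _ _ => 0
  | npos _ _ => 0
  | and φ ψ => max φ.qrank ψ.qrank
  | or φ ψ => max φ.qrank ψ.qrank
  | ex _ φ => φ.qrank + 1
  | all _ φ => φ.qrank + 1

/-- The number of quantifier occurrences in a formula. -/
def qcount : FO τ → ℕ
  | eq _ _ => 0
  | ne _ _ => 0
  | pos _ _ => 0
  | npos _ _ => 0
  | and φ ψ => φ.qcount + ψ.qcount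
  | or φ ψ => φ.qcount + ψ.qcount
  | ex _ φ => φ.qcount + 1
  | all _ φ => φ.qcount + 1

/-- The free variables of a formula. -/
def freeVars : FO τ → Finset ℕ
  | eq x y => {x, y}
  | ne x y => {x, y}
  | pos _ x => {x}
  | npos _ x => {x}
  | and φ ψ => φ.freeVars ∪ ψ.freeVars
  | or φ ψ => φ.freeVars ∪ ψ.freeVars
  | ex x φ => φ.freeVars \ {x}
  | all x φ => φ.freeVars \ {x}

/-- A sentence is a formula with no free variables. -/
def IsSentence (φ : FO τ) : Prop := φ.freeVars = ∅

/-- Satisfaction of a formula in a model under a variable assignment. -/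
def sat {n : ℕ} (M : UModel τ n) : (ℕ → Fin n) → FO τ → Prop
  | s, eq x y => s x = s y
  | s, ne x y => s x ≠ s y
  | s, pos P x => P ∈ M (s x)
  | s, npos P x => P ∉ M (s x)
  | s, and φ ψ => sat M s φ ∧ sat M s ψ
  | s, or φ ψ => sat M s φ ∨ sat M s ψ
  | s, ex x φ => ∃ a : Fin n, sat M (Function.update s x a) φ
  | s, all x φ => ∀ a : Fin n, sat M (Function.update s x a) φ

end FO

/-- Truth of a formula in a model (for sentences, independent of the assignment). -/
def Sat {τ : Type} {n : ℕ} (M : UModel τ n) (φ : FO τ) : Prop :=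
  ∀ s : ℕ → Fin n, FO.sat M s φ

/-- Two `τ`-models of size `n` are isomorphic iff every `τ`-type is realized by
the same number of points in both. -/
def Iso {τ : Type} {n : ℕ} (M M' : UModel τ n) : Prop :=
  ∀ π : Set τ, typeCount M π = typeCount M' π

/-- A sentence `φ` defines the model `M` (among `τ`-models of size `n`) if the
models of size `n` satisfying `φ` are exactly those isomorphic to `M`. -/
def Defines {τ : Type} {n : ℕ} (φ : FO τ) (M : UModel τ n) : Prop :=
  ∀ M' : UModel τ n, Sat M' φ ↔ Iso M' M

/-- The description complexity `C(M)`: the size of the smallest FO[τ] sentence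
defining `M` among `τ`-models of the same size. -/
noncomputable def descComp {τ : Type} {n : ℕ} (M : UModel τ n) : ℕ :=
  sInf {s : ℕ | ∃ φ : FO τ, φ.IsSentence ∧ Defines φ M ∧ φ.size = s}

/-- The constant `c_τ := 15|τ|·2^{|τ|}`. -/
def cTau (τ : Type) [Fintype τ] : ℕ := 15 * Fintype.card τ * 2 ^ Fintype.card τ

/-- `M ≡_d M'`: every `τ`-type realized fewer than `d` times in one of the models
is realized exactly the same number of times in both; equivalently, the counts of
realizing points truncated at `d` coincide for all types. -/
def EquivD {τ : Type} {n : ℕ} (d : ℕ) (M M' : UModel τ n) : Prop :=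
  ∀ π : Set τ, min (typeCount M π) d = min (typeCount M' π) d

/-- `φ` defines the `≡_d`-equivalence class of `M`: the size-`n` models satisfying
`φ` are exactly those `≡_d`-equivalent to `M`. -/
def DefinesD {τ : Type} {n : ℕ} (d : ℕ) (φ : FO τ) (M : UModel τ n) : Prop :=
  ∀ M' : UModel τ n, Sat M' φ ↔ EquivD d M' M

/-- The `d`-description complexity `C_d(M)`: the size of the smallest FO_d[τ]
sentence (quantifier rank at most `d`) true exactly in the size-`n` models
`≡_d`-equivalent to `M`. -/
noncomputable def descCompD {τ : Type} {n : ℕ} (d : ℕ) (M : UModel τ n) : ℕ :=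
  sInf {s : ℕ | ∃ φ : FO τ, φ.IsSentence ∧ φ.qrank ≤ d ∧ DefinesD d φ M ∧ φ.size = s}

/-- The Shannon entropy `H_S(M) = Σ_π −(|π|_M/n)·log₂(|π|_M/n)` (terms with
`|π|_M = 0` vanish, as `Real.logb 2 0 = 0`). -/
noncomputable def HS {τ : Type} [Fintype τ] {n : ℕ} (M : UModel τ n) : ℝ :=
  ∑ π : Set τ, -((typeCount M π : ℝ) / n) * Real.logb 2 ((typeCount M π : ℝ) / n)

/-- The Boltzmann entropy `H_B(M)`: `log₂` of the number of `τ`-models with the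
same domain that are isomorphic to `M`. -/
noncomputable def HB {τ : Type} {n : ℕ} (M : UModel τ n) : ℝ :=
  Real.logb 2 (Nat.card {M' : UModel τ n // Iso M' M})

/-- The Boltzmann entropy with respect to `≡_d`: `log₂` of the number of
`τ`-models with the same domain that are `≡_d`-equivalent to `M`. -/
noncomputable def HBd {τ : Type} {n : ℕ} (d : ℕ) (M : UModel τ n) : ℝ :=
  Real.logb 2 (Nat.card {M' : UModel τ n // EquivD d M' M})


-- ===================== helpers =====================
namespace DC
variable {τ : Type}

def bigAnd (b : FO τ) : List (FO τ) → FO τ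
  | [] => b
  | [φ] => φ
  | φ :: ψ :: l => FO.and φ (bigAnd b (ψ :: l))

def bigOr (b : FO τ) : List (FO τ) → FO τ
  | [] => b
  | [φ] => φ
  | φ :: ψ :: l => FO.or φ (bigOr b (ψ :: l))

lemma sat_bigAnd {n} (M : UModel τ n) (s : ℕ → Fin n) (b : FO τ) (hb : FO.sat M s b) :
    ∀ l : List (FO τ), (FO.sat M s (bigAnd b l) ↔ ∀ φ ∈ l, FO.sat M s φ)
  | [] => by simpa [bigAnd] using hb
  | [φ] => by simp [bigAnd]
  | φ :: ψ :: l => by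
    have ih := sat_bigAnd M s b hb (ψ :: l)
    simp only [bigAnd, FO.sat, ih, List.mem_cons]
    constructor
    · rintro ⟨h1, h2⟩ χ (rfl | h) <;> [exact h1; exact h2 _ (by simpa using h)]
    · intro h; exact ⟨h φ (Or.inl rfl), fun χ hχ => h χ (Or.inr hχ)⟩

lemma sat_bigOr {n} (M : UModel τ n) (s : ℕ → Fin n) (b : FO τ) (hb : ¬ FO.sat M s b) :
    ∀ l : List (FO τ), (FO.sat M s (bigOr b l) ↔ ∃ φ ∈ l, FO.sat M s φ)
  | [] => by simpa [bigOr] using hb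
  | [φ] => by simp [bigOr]
  | φ :: ψ :: l => by
    have ih := sat_bigOr M s b hb (ψ :: l)
    simp only [bigOr, FO.sat, ih, List.mem_cons]
    constructor
    · rintro (h | ⟨χ, hχ, h⟩)
      · exact ⟨φ, Or.inl rfl, h⟩
      · exact ⟨χ, Or.inr hχ, h⟩
    · rintro ⟨χ, (rfl | hχ), h⟩
      · exact Or.inl h
      · exact Or.inr ⟨χ, hχ, h⟩

lemma size_bigAnd_nonempty (b : FO τ) :
    ∀ l : List (FO τ), l ≠ [] → (bigAnd b l).size + 1 = (l.map FO.size).sum + l.length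
  | [], h => absurd rfl h
  | [φ], _ => by simp [bigAnd]
  | φ :: ψ :: l, _ => by
    have ih := size_bigAnd_nonempty b (ψ :: l) (by simp)
    simp only [bigAnd, FO.size, List.map_cons, List.sum_cons, List.length_cons] at *
    omega

lemma size_bigOr_nonempty (b : FO τ) :
    ∀ l : List (FO τ), l ≠ [] → (bigOr b l).size + 1 = (l.map FO.size).sum + l.length
  | [], h => absurd rfl h
  | [φ], _ => by simp [bigOr]
  | φ :: ψ :: l, _ => by
    have ih := size_bigOr_nonempty b (ψ :: l) (by simp)
    simp only [bigOr, FO.size, List.map_cons, List.sum_cons, List.length_cons] at *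
    omega

lemma qrank_bigAnd (b : FO τ) (hb : b.qrank = 0) :
    ∀ l : List (FO τ), (∀ φ ∈ l, φ.qrank = 0) → (bigAnd b l).qrank = 0
  | [], _ => hb
  | [φ], h => h φ (by simp)
  | φ :: ψ :: l, h => by
    have ih := qrank_bigAnd b hb (ψ :: l) (fun χ hχ => h χ (by simpa using Or.inr hχ))
    simp only [bigAnd, FO.qrank, ih, h φ (by simp), Nat.max_self]

lemma qrank_bigOr (b : FO τ) (hb : b.qrank = 0) :
    ∀ l : List (FO τ), (∀ φ ∈ l, φ.qrank = 0) → (bigOr b l).qrank = 0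
  | [], _ => hb
  | [φ], h => h φ (by simp)
  | φ :: ψ :: l, h => by
    have ih := qrank_bigOr b hb (ψ :: l) (fun χ hχ => h χ (by simpa using Or.inr hχ))
    simp only [bigOr, FO.qrank, ih, h φ (by simp), Nat.max_self]

lemma fv_bigAnd (b : FO τ) (A : Finset ℕ) (hb : b.freeVars ⊆ A) :
    ∀ l : List (FO τ), (∀ φ ∈ l, φ.freeVars ⊆ A) → (bigAnd b l).freeVars ⊆ A
  | [], _ => hb
  | [φ], h => h φ (by simp)
  | φ :: ψ :: l, h => by
    have ih := fv_bigAnd b A hb (ψ :: l) (fun χ hχ => h χ (by simpa using Or.inr hχ))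
    simpa [bigAnd, FO.freeVars, Finset.union_subset_iff] using ⟨h φ (by simp), ih⟩

lemma fv_bigOr (b : FO τ) (A : Finset ℕ) (hb : b.freeVars ⊆ A) :
    ∀ l : List (FO τ), (∀ φ ∈ l, φ.freeVars ⊆ A) → (bigOr b l).freeVars ⊆ A
  | [], _ => hb
  | [φ], h => h φ (by simp)
  | φ :: ψ :: l, h => by
    have ih := fv_bigOr b A hb (ψ :: l) (fun χ hχ => h χ (by simpa using Or.inr hχ))
    simpa [bigOr, FO.freeVars, Finset.union_subset_iff] using ⟨h φ (by simp), ih⟩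

end DC

namespace DC
variable {τ : Type}

def allsF : ℕ → ℕ → FO τ → FO τ
  | _, 0, φ => φ
  | v, c+1, φ => FO.all v (allsF (v+1) c φ)

def exsF : ℕ → ℕ → FO τ → FO τ
  | _, 0, φ => φ
  | v, c+1, φ => FO.ex v (exsF (v+1) c φ)

lemma sat_allsF {n} (M : UModel τ n) (φ : FO τ) :
    ∀ (c v : ℕ) (s : ℕ → Fin n),
      FO.sat M s (allsF v c φ) ↔
        ∀ g : ℕ → Fin n, (∀ i, ¬(v ≤ i ∧ i < v + c) → g i = s i) → FO.sat M g φ := by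
  intro c
  induction c with
  | zero =>
    intro v s
    simp only [allsF]
    constructor
    · intro h g hg
      have : g = s := funext fun i => hg i (by omega)
      rwa [this]
    · intro h; exact h s (fun _ _ => rfl)
  | succ c ih =>
    intro v s
    simp only [allsF, FO.sat, ih]
    constructor
    · intro h g hg
      refine h (g v) g (fun i hi => ?_)
      by_cases hiv : i = v
      · subst hiv; simp
      · rw [Function.update_of_ne hiv]
        exact hg i (by omega)
    · intro h a g hg
      refine h g (fun i hi => ?_)
      have hiv : i ≠ v := by omega
      have := hg i (by omega)
      rwa [Function.update_of_ne hiv] at this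

lemma sat_exsF {n} (M : UModel τ n) (φ : FO τ) :
    ∀ (c v : ℕ) (s : ℕ → Fin n),
      FO.sat M s (exsF v c φ) ↔
        ∃ g : ℕ → Fin n, (∀ i, ¬(v ≤ i ∧ i < v + c) → g i = s i) ∧ FO.sat M g φ := by
  intro c
  induction c with
  | zero =>
    intro v s
    simp only [exsF]
    constructor
    · intro h; exact ⟨s, fun _ _ => rfl, h⟩
    · rintro ⟨g, hg, h⟩
      have : g = s := funext fun i => hg i (by omega)
      rwa [this] at h
  | succ c ih =>
    intro v s
    simp only [exsF, FO.sat, ih]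
    constructor
    · rintro ⟨a, g, hg, h⟩
      refine ⟨g, fun i hi => ?_, h⟩
      have hiv : i ≠ v := by omega
      have := hg i (by omega)
      rwa [Function.update_of_ne hiv] at this
    · rintro ⟨g, hg, h⟩
      refine ⟨g v, g, fun i hi => ?_, h⟩
      by_cases hiv : i = v
      · subst hiv; simp
      · rw [Function.update_of_ne hiv]
        exact hg i (by omega)

lemma size_allsF (φ : FO τ) : ∀ c v, (allsF v c φ).size = c + φ.size
  | 0, v => by simp [allsF, exsF]
  | c+1, v => by simp [allsF, FO.size, size_allsF φ c (v+1)]; omega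

lemma size_exsF (φ : FO τ) : ∀ c v, (exsF v c φ).size = c + φ.size
  | 0, v => by simp [allsF, exsF]
  | c+1, v => by simp [exsF, FO.size, size_exsF φ c (v+1)]; omega

lemma qrank_allsF (φ : FO τ) : ∀ c v, (allsF v c φ).qrank = c + φ.qrank
  | 0, v => by simp [allsF, exsF]
  | c+1, v => by simp [allsF, FO.qrank, qrank_allsF φ c (v+1)]; omega

lemma qrank_exsF (φ : FO τ) : ∀ c v, (exsF v c φ).qrank = c + φ.qrank
  | 0, v => by simp [allsF, exsF]
  | c+1, v => by simp [exsF, FO.qrank, qrank_exsF φ c (v+1)]; omega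

lemma fv_allsF (φ : FO τ) : ∀ c v, (allsF v c φ).freeVars = φ.freeVars \ Finset.Ico v (v+c)
  | 0, v => by simp [allsF]
  | c+1, v => by
    simp only [allsF, FO.freeVars, fv_allsF φ c (v+1)]
    ext x
    simp only [Finset.mem_sdiff, Finset.mem_Ico, Finset.mem_singleton]
    constructor
    · rintro ⟨⟨h1, h2⟩, h3⟩; exact ⟨h1, by omega⟩
    · rintro ⟨h1, h2⟩; exact ⟨⟨h1, by omega⟩, by omega⟩

lemma fv_exsF (φ : FO τ) : ∀ c v, (exsF v c φ).freeVars = φ.freeVars \ Finset.Ico v (v+c)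
  | 0, v => by simp [exsF]
  | c+1, v => by
    simp only [exsF, FO.freeVars, fv_exsF φ c (v+1)]
    ext x
    simp only [Finset.mem_sdiff, Finset.mem_Ico, Finset.mem_singleton]
    constructor
    · rintro ⟨⟨h1, h2⟩, h3⟩; exact ⟨h1, by omega⟩
    · rintro ⟨h1, h2⟩; exact ⟨⟨h1, by omega⟩, by omega⟩

end DC

namespace DC
open scoped Classical
variable {τ : Type}

-- extra bigAnd lemma for nonempty lists (base irrelevant)
lemma sat_bigAnd_ne {n} (M : UModel τ n) (s : ℕ → Fin n) (b : FO τ) :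
    ∀ l : List (FO τ), l ≠ [] → (FO.sat M s (bigAnd b l) ↔ ∀ φ ∈ l, FO.sat M s φ)
  | [], h => absurd rfl h
  | [φ], _ => by simp [bigAnd]
  | φ :: ψ :: l, _ => by
    have ih := sat_bigAnd_ne M s b (ψ :: l) (by simp)
    simp only [bigAnd, FO.sat, ih, List.mem_cons]
    constructor
    · rintro ⟨h1, h2⟩ χ (rfl | h) <;> [exact h1; exact h2 _ (by simpa using h)]
    · intro h; exact ⟨h φ (Or.inl rfl), fun χ hχ => h χ (Or.inr hχ)⟩

variable [Fintype τ]

noncomputable def predList (τ : Type) [Fintype τ] : List τ := Finset.univ.toList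

lemma predList_ne (hτ : Nonempty τ) : predList τ ≠ [] := by
  simp [predList, Finset.toList_eq_nil, Finset.univ_eq_empty_iff, not_isEmpty_iff.2 hτ]

lemma predList_length : (predList τ).length = Fintype.card τ := by
  simp [predList]

noncomputable def typeF (π : Set τ) (v : ℕ) : FO τ :=
  bigAnd (FO.ne 0 0) ((predList τ).map fun P => if P ∈ π then FO.pos P v else FO.npos P v)

noncomputable def ntypeF (π : Set τ) (v : ℕ) : FO τ :=
  bigOr (FO.ne 0 0) ((predList τ).map fun P => if P ∈ π then FO.npos P v else FO.pos P v)

lemma sat_typeF {n} (M : UModel τ n) (s : ℕ → Fin n) (hτ : Nonempty τ) (π : Set τ) (v : ℕ) :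
    FO.sat M s (typeF π v) ↔ M (s v) = π := by
  rw [typeF, sat_bigAnd_ne M s _ _ (by simp [predList_ne hτ])]
  simp only [List.mem_map]
  constructor
  · intro h
    ext P
    have hP := h _ ⟨P, by simp [predList], rfl⟩
    by_cases hmem : P ∈ π <;> simp [hmem, FO.sat] at hP <;> tauto
  · rintro rfl φ ⟨P, _, rfl⟩
    by_cases hmem : P ∈ M (s v) <;> simp [hmem, FO.sat]

lemma sat_ntypeF {n} (M : UModel τ n) (s : ℕ → Fin n) (π : Set τ) (v : ℕ) :
    FO.sat M s (ntypeF π v) ↔ M (s v) ≠ π := by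
  rw [ntypeF, sat_bigOr M s _ (by simp [FO.sat])]
  simp only [List.mem_map]
  constructor
  · rintro ⟨φ, ⟨P, _, rfl⟩, h⟩ hEq
    subst hEq
    by_cases hmem : P ∈ M (s v) <;> simp [hmem, FO.sat] at h
  · intro h
    have : ∃ P, ¬(P ∈ M (s v) ↔ P ∈ π) := by
      by_contra hc
      push_neg at hc
      exact h (Set.ext fun P => hc P)
    obtain ⟨P, hP⟩ := this
    refine ⟨_, ⟨P, by simp [predList], rfl⟩, ?_⟩
    by_cases hmem : P ∈ π <;> simp [hmem, FO.sat] <;> tauto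

lemma size_typeF (hτ : Nonempty τ) (π : Set τ) (v : ℕ) :
    (typeF π v).size + 1 = 2 * Fintype.card τ := by
  rw [typeF, size_bigAnd_nonempty _ _ (by simp [predList_ne hτ])]
  rw [List.map_map]
  have : ((predList τ).map (FO.size ∘ fun P => if P ∈ π then FO.pos P v else FO.npos P v))
      = (predList τ).map (fun _ => 1) := by
    apply List.map_congr_left
    intro P _
    by_cases hmem : P ∈ π <;> simp [hmem, FO.size]
  rw [this]
  simp [predList_length]
  omega

lemma size_ntypeF (hτ : Nonempty τ) (π : Set τ) (v : ℕ) :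
    (ntypeF π v).size + 1 = 2 * Fintype.card τ := by
  rw [ntypeF, size_bigOr_nonempty _ _ (by simp [predList_ne hτ])]
  rw [List.map_map]
  have : ((predList τ).map (FO.size ∘ fun P => if P ∈ π then FO.npos P v else FO.pos P v))
      = (predList τ).map (fun _ => 1) := by
    apply List.map_congr_left
    intro P _
    by_cases hmem : P ∈ π <;> simp [hmem, FO.size]
  rw [this]
  simp [predList_length]
  omega

lemma qrank_typeF (π : Set τ) (v : ℕ) : (typeF π v).qrank = 0 := by
  apply qrank_bigAnd _ (by simp [FO.qrank])
  rintro φ hφ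
  simp only [List.mem_map] at hφ
  obtain ⟨P, _, rfl⟩ := hφ
  by_cases hmem : P ∈ π <;> simp [hmem, FO.qrank]

lemma qrank_ntypeF (π : Set τ) (v : ℕ) : (ntypeF π v).qrank = 0 := by
  apply qrank_bigOr _ (by simp [FO.qrank])
  rintro φ hφ
  simp only [List.mem_map] at hφ
  obtain ⟨P, _, rfl⟩ := hφ
  by_cases hmem : P ∈ π <;> simp [hmem, FO.qrank]

lemma fv_typeF (π : Set τ) (v : ℕ) : (typeF π v).freeVars ⊆ {0, v} := by
  apply fv_bigAnd _ _ (by simp [FO.freeVars])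
  rintro φ hφ
  simp only [List.mem_map] at hφ
  obtain ⟨P, _, rfl⟩ := hφ
  by_cases hmem : P ∈ π <;> simp [hmem, FO.freeVars]

lemma fv_ntypeF (π : Set τ) (v : ℕ) : (ntypeF π v).freeVars ⊆ {0, v} := by
  apply fv_bigOr _ _ (by simp [FO.freeVars])
  rintro φ hφ
  simp only [List.mem_map] at hφ
  obtain ⟨P, _, rfl⟩ := hφ
  by_cases hmem : P ∈ π <;> simp [hmem, FO.freeVars]

noncomputable def pairF (π : Set τ) : FO τ := FO.and (typeF π 0) (typeF π 1)
noncomputable def npairF (π : Set τ) : FO τ := FO.or (ntypeF π 0) (ntypeF π 1)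

lemma sat_pairF {n} (M : UModel τ n) (s : ℕ → Fin n) (hτ : Nonempty τ) (π : Set τ) :
    FO.sat M s (pairF π) ↔ M (s 0) = π ∧ M (s 1) = π := by
  simp [pairF, FO.sat, sat_typeF M s hτ]

lemma sat_npairF {n} (M : UModel τ n) (s : ℕ → Fin n) (π : Set τ) :
    FO.sat M s (npairF π) ↔ ¬(M (s 0) = π ∧ M (s 1) = π) := by
  simp [npairF, FO.sat, sat_ntypeF M s]
  tauto

lemma size_pairF (hτ : Nonempty τ) (π : Set τ) :
    (pairF π).size + 1 = 4 * Fintype.card τ := by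
  have h1 := size_typeF hτ π 0
  have h2 := size_typeF hτ π 1
  simp only [pairF, FO.size]
  omega

lemma size_npairF (hτ : Nonempty τ) (π : Set τ) :
    (npairF π).size + 1 = 4 * Fintype.card τ := by
  have h1 := size_ntypeF hτ π 0
  have h2 := size_ntypeF hτ π 1
  simp only [npairF, FO.size]
  omega

end DC

namespace DC
open scoped Classical
variable {τ : Type} [Fintype τ]

noncomputable def Sf (t : Set τ → ℕ) (j : ℕ) : Finset (Set τ) :=
  Finset.univ.filter (fun π => t π = j)

noncomputable def SL (t : Set τ → ℕ) (j : ℕ) : List (Set τ) := (Sf t j).toList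

lemma mem_SL {t : Set τ → ℕ} {j : ℕ} {π : Set τ} : π ∈ SL t j ↔ t π = j := by
  simp [SL, Sf]

lemma len_SL {t : Set τ → ℕ} {j : ℕ} : (SL t j).length = (Sf t j).card := by
  simp [SL]

noncomputable def geCh (t : Set τ → ℕ) (d : ℕ) : ℕ → ℕ → FO τ
  | _, 0 => bigOr (FO.ne 0 0) ((SL t d).map pairF)
  | j, c+1 =>
    if (SL t j).isEmpty then (FO.ne 1 j).and (geCh t d (j+1) c)
    else (bigOr (FO.ne 0 0) ((SL t j).map pairF)).or ((FO.ne 1 j).and (geCh t d (j+1) c))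

lemma sat_geCh {n} (M : UModel τ n) (hτ : Nonempty τ) (t : Set τ → ℕ) (d : ℕ)
    (htd : ∀ π, t π ≤ d) :
    ∀ (c j : ℕ), j + c = d → ∀ s : ℕ → Fin n,
      (FO.sat M s (geCh t d j c) ↔
        (M (s 1) = M (s 0) ∧ j ≤ t (M (s 0)) ∧
          ∀ i, j ≤ i → i < t (M (s 0)) → s 1 ≠ s i)) := by
  intro c
  induction c with
  | zero =>
    intro j hj s
    subst hj
    simp only [Nat.add_zero] at *
    rw [geCh, sat_bigOr M s _ (by simp [FO.sat])]
    constructor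
    · rintro ⟨φ, hφ, hsat⟩
      simp only [List.mem_map] at hφ
      obtain ⟨π, hπ, rfl⟩ := hφ
      rw [sat_pairF M s hτ] at hsat
      obtain ⟨h0, h1⟩ := hsat
      rw [mem_SL] at hπ
      refine ⟨by rw [h0, h1], by rw [h0]; omega, fun i hi1 hi2 => ?_⟩
      have := htd (M (s 0)); omega
    · rintro ⟨h1, h2, _⟩
      have hd : t (M (s 0)) = j := le_antisymm (htd _) h2
      refine ⟨pairF (M (s 0)), ?_, ?_⟩
      · simp only [List.mem_map]
        exact ⟨M (s 0), mem_SL.2 hd, rfl⟩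
      · rw [sat_pairF M s hτ]; exact ⟨rfl, h1⟩
  | succ c ih =>
    intro j hj s
    have ihj := ih (j+1) (by omega) s
    by_cases hSL : (SL t j).isEmpty
    · have hno : t (M (s 0)) ≠ j := by
        intro h
        have : M (s 0) ∈ SL t j := mem_SL.2 h
        rw [List.isEmpty_iff] at hSL
        simp [hSL] at this
      rw [geCh]
      simp only [hSL, if_true, FO.sat, ihj]
      constructor
      · rintro ⟨hne, hty, hj1, hall⟩
        refine ⟨hty, by omega, fun i hi1 hi2 => ?_⟩
        rcases Nat.eq_or_lt_of_le hi1 with rfl | hlt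
        · exact hne
        · exact hall i (by omega) hi2
      · rintro ⟨hty, hj1, hall⟩
        have hgt : j + 1 ≤ t (M (s 0)) := by omega
        exact ⟨hall j le_rfl (by omega), hty, hgt, fun i hi1 hi2 => hall i (by omega) hi2⟩
    · rw [geCh]
      simp only [hSL, Bool.false_eq_true, if_false, FO.sat, ihj]
      rw [sat_bigOr M s _ (by simp [FO.sat])]
      constructor
      · rintro (⟨φ, hφ, hsat⟩ | ⟨hne, hty, hj1, hall⟩)
        · simp only [List.mem_map] at hφ
          obtain ⟨π, hπ, rfl⟩ := hφ
          rw [sat_pairF M s hτ] at hsat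
          obtain ⟨h0, h1⟩ := hsat
          rw [mem_SL] at hπ
          refine ⟨by rw [h0, h1], by rw [h0]; omega, fun i hi1 hi2 => ?_⟩
          rw [h0] at hi2; omega
        · refine ⟨hty, by omega, fun i hi1 hi2 => ?_⟩
          rcases Nat.eq_or_lt_of_le hi1 with rfl | hlt
          · exact hne
          · exact hall i (by omega) hi2
      · rintro ⟨hty, hj1, hall⟩
        by_cases hcase : t (M (s 0)) = j
        · left
          refine ⟨pairF (M (s 0)), ?_, ?_⟩
          · simp only [List.mem_map]
            exact ⟨M (s 0), mem_SL.2 hcase, rfl⟩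
          · rw [sat_pairF M s hτ]; exact ⟨rfl, hty⟩
        · right
          exact ⟨hall j le_rfl (by omega), hty, by omega, fun i hi1 hi2 => hall i (by omega) hi2⟩

end DC

namespace DC
open scoped Classical
variable {τ : Type} [Fintype τ]

noncomputable def neCh (t : Set τ → ℕ) : ℕ → ℕ → FO τ
  | j, 0 => bigAnd (FO.eq 0 0) ((SL t j).map npairF)
  | j, c+1 =>
    if (SL t j).isEmpty then (FO.eq 1 (j+1)).or (neCh t (j+1) c)
    else (bigAnd (FO.eq 0 0) ((SL t j).map npairF)).and
      ((FO.eq 1 (j+1)).or (neCh t (j+1) c))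

lemma sat_nblock {n} (M : UModel τ n) (s : ℕ → Fin n) (t : Set τ → ℕ) (j : ℕ) :
    FO.sat M s (bigAnd (FO.eq 0 0) ((SL t j).map npairF)) ↔
      ¬(M (s 1) = M (s 0) ∧ t (M (s 0)) = j) := by
  rw [sat_bigAnd M s _ (by simp [FO.sat])]
  constructor
  · intro h ⟨h1, h2⟩
    have := h (npairF (M (s 0))) (by simp only [List.mem_map]; exact ⟨_, mem_SL.2 h2, rfl⟩)
    rw [sat_npairF] at this
    exact this ⟨rfl, h1⟩
  · intro h φ hφ
    simp only [List.mem_map] at hφ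
    obtain ⟨π, hπ, rfl⟩ := hφ
    rw [sat_npairF]
    rintro ⟨rfl, h1⟩
    exact h ⟨h1, mem_SL.1 hπ⟩

lemma sat_neCh {n} (M : UModel τ n) (t : Set τ → ℕ) (d : ℕ) :
    ∀ (c j : ℕ), j + c = d - 1 → ∀ s : ℕ → Fin n,
      (FO.sat M s (neCh t j c) ↔
        ((M (s 1) = M (s 0) ∧ j ≤ t (M (s 0)) ∧ t (M (s 0)) ≤ d - 1) →
          ∃ i, j ≤ i ∧ i < t (M (s 0)) ∧ s 1 = s (i+1))) := by
  intro c
  induction c with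
  | zero =>
    intro j hj s
    rw [neCh, sat_nblock]
    constructor
    · rintro h ⟨h1, h2, h3⟩
      exact absurd ⟨h1, by omega⟩ h
    · rintro h ⟨h1, h2⟩
      obtain ⟨i, hi1, hi2, _⟩ := h ⟨h1, by omega, by omega⟩
      omega
  | succ c ih =>
    intro j hj s
    have ihj := ih (j+1) (by omega) s
    by_cases hSL : (SL t j).isEmpty
    · have hno : t (M (s 0)) ≠ j := by
        intro h
        have : M (s 0) ∈ SL t j := mem_SL.2 h
        rw [List.isEmpty_iff] at hSL
        simp [hSL] at this
      rw [neCh]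
      simp only [hSL, if_true, FO.sat, ihj]
      constructor
      · rintro (heq | himp) ⟨h1, h2, h3⟩
        · exact ⟨j, le_rfl, by omega, heq⟩
        · obtain ⟨i, hi1, hi2, hi3⟩ := himp ⟨h1, by omega, h3⟩
          exact ⟨i, by omega, hi2, hi3⟩
      · intro h
        by_cases hcond : M (s 1) = M (s 0) ∧ j + 1 ≤ t (M (s 0)) ∧ t (M (s 0)) ≤ d - 1
        · obtain ⟨i, hi1, hi2, hi3⟩ := h ⟨hcond.1, by omega, hcond.2.2⟩
          rcases Nat.eq_or_lt_of_le hi1 with rfl | hlt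
          · exact Or.inl hi3
          · exact Or.inr (fun _ => ⟨i, by omega, hi2, hi3⟩)
        · exact Or.inr (fun hc => absurd hc hcond)
    · rw [neCh]
      simp only [hSL, Bool.false_eq_true, if_false, FO.sat, ihj, sat_nblock]
      constructor
      · rintro ⟨hblock, (heq | himp)⟩ ⟨h1, h2, h3⟩
        · have hne : t (M (s 0)) ≠ j := fun hh => hblock ⟨h1, hh⟩
          exact ⟨j, le_rfl, by omega, heq⟩
        · have hne : t (M (s 0)) ≠ j := fun h => hblock ⟨h1, h⟩
          obtain ⟨i, hi1, hi2, hi3⟩ := himp ⟨h1, by omega, h3⟩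
          exact ⟨i, by omega, hi2, hi3⟩
      · intro h
        constructor
        · rintro ⟨h1, h2⟩
          obtain ⟨i, hi1, hi2, _⟩ := h ⟨h1, by omega, by omega⟩
          omega
        · by_cases hcond : M (s 1) = M (s 0) ∧ j + 1 ≤ t (M (s 0)) ∧ t (M (s 0)) ≤ d - 1
          · obtain ⟨i, hi1, hi2, hi3⟩ := h ⟨hcond.1, by omega, hcond.2.2⟩
            rcases Nat.eq_or_lt_of_le hi1 with rfl | hlt
            · exact Or.inl hi3
            · exact Or.inr (fun _ => ⟨i, by omega, hi2, hi3⟩)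
          · exact Or.inr (fun hc => absurd hc hcond)

end DC

namespace DC
open scoped Classical
variable {τ : Type} [Fintype τ]

noncomputable def Rz {n : ℕ} (M : UModel τ n) (κ : Set τ) : Finset (Fin n) :=
  Finset.univ.filter (fun b => M b = κ)

lemma mem_Rz {n} {M : UModel τ n} {κ : Set τ} {a : Fin n} : a ∈ Rz M κ ↔ M a = κ := by
  simp [Rz]

lemma typeCount_eq {n} (M : UModel τ n) (κ : Set τ) : typeCount M κ = (Rz M κ).card := by
  have h : {a : Fin n | M a = κ} = ↑(Rz M κ) := by ext a; simp [Rz]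
  rw [typeCount, h, Set.ncard_coe_finset]

lemma pick_avoid {n} {M : UModel τ n} {κ : Set τ} {m : ℕ} (hm : m ≤ typeCount M κ)
    (F : Finset (Fin n)) (hF : F.card < m) : ∃ b, M b = κ ∧ b ∉ F := by
  have hsub : ¬ Rz M κ ⊆ F := by
    intro h
    have := Finset.card_le_card h
    rw [typeCount_eq] at hm; omega
  rw [Finset.not_subset] at hsub
  obtain ⟨b, hb, hbF⟩ := hsub
  exact ⟨b, mem_Rz.1 hb, hbF⟩

noncomputable def U1F (t : Set τ → ℕ) : FO τ :=
  bigOr (FO.ne 0 0) ((SL t 1).map (fun π => typeF π 0))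

lemma sat_U1F {n} (M : UModel τ n) (s : ℕ → Fin n) (hτ : Nonempty τ) (t : Set τ → ℕ) :
    FO.sat M s (U1F t) ↔ t (M (s 0)) = 1 := by
  rw [U1F, sat_bigOr M s _ (by simp [FO.sat])]
  constructor
  · rintro ⟨φ, hφ, hsat⟩
    simp only [List.mem_map] at hφ
    obtain ⟨π, hπ, rfl⟩ := hφ
    rw [sat_typeF M s hτ] at hsat
    rw [hsat]; exact mem_SL.1 hπ
  · intro h
    refine ⟨typeF (M (s 0)) 0, ?_, ?_⟩
    · simp only [List.mem_map]; exact ⟨_, mem_SL.2 h, rfl⟩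
    · rw [sat_typeF M s hτ]

noncomputable def matrixGe (t : Set τ → ℕ) (d : ℕ) : FO τ :=
  (U1F t).or (FO.ex 1 ((FO.ne 1 0).and (geCh t d 2 (d-2))))

lemma sat_matrixGe {n} (M : UModel τ n) (hτ : Nonempty τ) (t : Set τ → ℕ) (d : ℕ)
    (hd2 : 2 ≤ d) (htd : ∀ π, t π ≤ d) (g : ℕ → Fin n) :
    FO.sat M g (matrixGe t d) ↔
      (t (M (g 0)) = 1 ∨
        ∃ b : Fin n, M b = M (g 0) ∧ b ≠ g 0 ∧ 2 ≤ t (M (g 0)) ∧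
          ∀ i, 2 ≤ i → i < t (M (g 0)) → b ≠ g i) := by
  have e0 : ∀ b : Fin n, Function.update g 1 b 0 = g 0 :=
    fun b => Function.update_of_ne (by decide) _ _
  have e1 : ∀ b : Fin n, Function.update g 1 b 1 = b := fun b => Function.update_self _ _ _
  constructor
  · rintro (h1 | ⟨b, hb⟩)
    · left; rwa [sat_U1F M g hτ] at h1
    · right
      obtain ⟨hne, hch⟩ := hb
      rw [sat_geCh M hτ t d htd (d-2) 2 (by omega)] at hch
      rw [e0, e1] at hch
      obtain ⟨hty, h2, hall⟩ := hch
      rw [FO.sat, e0, e1] at hne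
      refine ⟨b, hty, hne, h2, fun i hi1 hi2 => ?_⟩
      have := hall i hi1 hi2
      rwa [Function.update_of_ne (by omega)] at this
  · rintro (h1 | ⟨b, hty, hne, h2, hall⟩)
    · left; rwa [sat_U1F M g hτ]
    · right
      refine ⟨b, ?_, ?_⟩
      · rw [FO.sat, e0, e1]; exact hne
      · rw [sat_geCh M hτ t d htd (d-2) 2 (by omega), e0, e1]
        refine ⟨hty, h2, fun i hi1 hi2 => ?_⟩
        rw [Function.update_of_ne (by omega : i ≠ 1)]
        exact hall i hi1 hi2

noncomputable def PhiGe (t : Set τ → ℕ) (d : ℕ) : FO τ :=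
  FO.all 0 (allsF 2 (d-2) (matrixGe t d))

lemma Sat_PhiGe {n} (M : UModel τ n) (hτ : Nonempty τ) (t : Set τ → ℕ) (d : ℕ)
    (hd2 : 2 ≤ d) (htd : ∀ π, t π ≤ d) :
    Sat M (PhiGe t d) ↔
      ∀ a : Fin n, 1 ≤ t (M a) ∧ t (M a) ≤ typeCount M (M a) := by
  have key : ∀ s : ℕ → Fin n, FO.sat M s (PhiGe t d) ↔
      ∀ (a : Fin n) (g : ℕ → Fin n),
        (∀ i, ¬(2 ≤ i ∧ i < 2 + (d-2)) → g i = Function.update s 0 a i) →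
        FO.sat M g (matrixGe t d) := by
    intro s
    rw [PhiGe, FO.sat]
    constructor
    · intro h a g hg
      have := (sat_allsF M _ (d-2) 2 (Function.update s 0 a)).1 (h a)
      exact this g hg
    · intro h a
      rw [sat_allsF M _ (d-2) 2]
      exact h a
  constructor
  · intro H a
    have Hs := (key (fun _ => a)).1 (H _)
    -- part 1 : 1 ≤ t (M a)
    have h1 : 1 ≤ t (M a) := by
      have := Hs a (fun _ => a) (fun i _ => by
        by_cases h0 : i = 0
        · subst h0; simp
        · rw [Function.update_of_ne h0])
      rw [sat_matrixGe M hτ t d hd2 htd] at this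
      rcases this with h | ⟨b, _, _, h2, _⟩
      · omega
      · omega
    refine ⟨h1, ?_⟩
    by_contra hcnt
    push_neg at hcnt
    set m := t (M a) with hm
    have hmem : a ∈ Rz M (M a) := mem_Rz.2 rfl
    have hcnt1 : 1 ≤ typeCount M (M a) := by
      rw [typeCount_eq]; exact Finset.card_pos.2 ⟨a, hmem⟩
    have hm2 : 2 ≤ m := by omega
    set l := ((Rz M (M a)).erase a).toList with hl
    have hlen : l.length ≤ m - 2 := by
      rw [hl, Finset.length_toList, Finset.card_erase_of_mem hmem]
      rw [typeCount_eq] at hcnt; omega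
    set g : ℕ → Fin n := fun i => if 2 ≤ i ∧ i - 2 < l.length then l.getD (i-2) a else a
      with hgdef
    have hg0 : g 0 = a := by simp [hgdef]
    have := Hs a g (fun i hi => by
      have : ¬(2 ≤ i ∧ i - 2 < l.length) := by
        intro ⟨hi2, hil⟩
        have := htd (M a)
        omega
      rw [hgdef]
      simp only [this, if_false]
      by_cases h0 : i = 0
      · subst h0; simp
      · rw [Function.update_of_ne h0])
    rw [sat_matrixGe M hτ t d hd2 htd, hg0] at this
    rcases this with h | ⟨b, hbty, hbne, _, hall⟩
    · omega
    · have hbRz : b ∈ (Rz M (M a)).erase a := Finset.mem_erase.2 ⟨hbne, mem_Rz.2 hbty⟩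
      have hbl : b ∈ l := by rw [hl]; exact Finset.mem_toList.2 hbRz
      obtain ⟨i0, hi0, hget⟩ := List.mem_iff_getElem.1 hbl
      have hgi : g (i0 + 2) = b := by
        have hc : 2 ≤ i0 + 2 ∧ (i0 + 2) - 2 < l.length := ⟨by omega, by omega⟩
        simp only [hgdef]
        rw [if_pos hc, show i0 + 2 - 2 = i0 by omega,
          List.getD_eq_getElem l a hi0, hget]
      exact hall (i0 + 2) (by omega) (by omega) hgi.symm
  · intro H s
    rw [key]
    intro a g hg
    have hg0 : g 0 = a := by
      have := hg 0 (by omega)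
      rwa [Function.update_self] at this
    obtain ⟨h1, h2⟩ := H a
    rw [sat_matrixGe M hτ t d hd2 htd, hg0]
    by_cases hm1 : t (M a) = 1
    · left; exact hm1
    · right
      set m := t (M a) with hm
      have hm2 : 2 ≤ m := by omega
      set F : Finset (Fin n) :=
        insert (g 0) ((Finset.range (m-2)).image (fun i => g (i+2))) with hF
      have hFcard : F.card < m := by
        calc F.card ≤ _ + 1 := Finset.card_insert_le _ _
        _ ≤ (m-2) + 1 := by
            have := Finset.card_image_le (s := Finset.range (m-2)) (f := fun i => g (i+2))
            simp only [Finset.card_range] at this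
            omega
        _ < m := by omega
      obtain ⟨b, hbty, hbF⟩ := pick_avoid h2 F hFcard
      refine ⟨b, hbty, ?_, hm2, fun i hi1 hi2 => ?_⟩
      · intro hba; apply hbF; rw [hF, hba, hg0]; exact Finset.mem_insert_self _ _
      · intro hbg
        apply hbF
        rw [hF]
        apply Finset.mem_insert_of_mem
        apply Finset.mem_image.2
        exact ⟨i - 2, Finset.mem_range.2 (by omega), by rw [show i - 2 + 2 = i by omega]; exact hbg.symm⟩

end DC

namespace DC
open scoped Classical
variable {τ : Type} [Fintype τ]

noncomputable def BigL (t : Set τ → ℕ) (d : ℕ) : List (Set τ) :=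
  (Finset.univ.filter (fun π => t π = 0 ∨ t π = d)).toList

noncomputable def BigOrF (t : Set τ → ℕ) (d : ℕ) : FO τ :=
  bigOr (FO.ne 0 0) ((BigL t d).map (fun π => typeF π 0))

lemma sat_BigOrF {n} (M : UModel τ n) (s : ℕ → Fin n) (hτ : Nonempty τ) (t : Set τ → ℕ)
    (d : ℕ) : FO.sat M s (BigOrF t d) ↔ (t (M (s 0)) = 0 ∨ t (M (s 0)) = d) := by
  rw [BigOrF, sat_bigOr M s _ (by simp [FO.sat])]
  constructor
  · rintro ⟨φ, hφ, hsat⟩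
    simp only [List.mem_map] at hφ
    obtain ⟨π, hπ, rfl⟩ := hφ
    rw [sat_typeF M s hτ] at hsat
    rw [hsat]
    simpa [BigL] using hπ
  · intro h
    refine ⟨typeF (M (s 0)) 0, ?_, ?_⟩
    · simp only [List.mem_map]
      exact ⟨M (s 0), by simpa [BigL] using h, rfl⟩
    · rw [sat_typeF M s hτ]

noncomputable def matrixLe (t : Set τ → ℕ) (d : ℕ) : FO τ :=
  (BigOrF t d).or (exsF 2 (d-2) (FO.all 1 ((FO.eq 1 0).or (neCh t 1 (d-2)))))

noncomputable def PhiLe (t : Set τ → ℕ) (d : ℕ) : FO τ := FO.all 0 (matrixLe t d)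

lemma Sat_PhiLe {n} (M : UModel τ n) (hτ : Nonempty τ) (t : Set τ → ℕ) (d : ℕ)
    (hd2 : 2 ≤ d) (htd : ∀ π, t π ≤ d) :
    Sat M (PhiLe t d) ↔
      ∀ a : Fin n, t (M a) = 0 ∨ t (M a) = d ∨ typeCount M (M a) ≤ t (M a) := by
  have einner : ∀ (g : ℕ → Fin n) (b : Fin n),
      (FO.sat M (Function.update g 1 b) ((FO.eq 1 0).or (neCh t 1 (d-2))) ↔
        (b = g 0 ∨
          ((M b = M (g 0) ∧ 1 ≤ t (M (g 0)) ∧ t (M (g 0)) ≤ d - 1) →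
            ∃ i, 1 ≤ i ∧ i < t (M (g 0)) ∧ b = g (i+1)))) := by
    intro g b
    have e0 : Function.update g 1 b 0 = g 0 := Function.update_of_ne (by decide) _ _
    have e1 : Function.update g 1 b 1 = b := Function.update_self _ _ _
    rw [FO.sat, FO.sat, sat_neCh M t d (d-2) 1 (by omega), e0, e1]
    constructor
    · rintro (h | h)
      · exact Or.inl h
      · right
        intro hc
        obtain ⟨i, hi1, hi2, hi3⟩ := h hc
        refine ⟨i, hi1, hi2, ?_⟩
        rwa [Function.update_of_ne (by omega : i + 1 ≠ 1)] at hi3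
    · rintro (h | h)
      · exact Or.inl h
      · right
        intro hc
        obtain ⟨i, hi1, hi2, hi3⟩ := h hc
        refine ⟨i, hi1, hi2, ?_⟩
        rwa [Function.update_of_ne (by omega : i + 1 ≠ 1)]
  have key : Sat M (PhiLe t d) ↔
      ∀ (s : ℕ → Fin n) (a : Fin n),
        FO.sat M (Function.update s 0 a) (matrixLe t d) := by
    constructor
    · intro H s a; exact H s a
    · intro H s; exact fun a => H s a
  rw [key]
  constructor
  · intro H a
    by_cases h0 : t (M a) = 0
    · exact Or.inl h0
    by_cases hdd : t (M a) = d
    · exact Or.inr (Or.inl hdd)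
    right; right
    set m := t (M a) with hm
    have hm1 : 1 ≤ m := by omega
    have hmd : m ≤ d - 1 := by have := htd (M a); omega
    by_contra hcnt
    push_neg at hcnt
    have Hs := H (fun _ => a) a
    rw [matrixLe, FO.sat] at Hs
    rcases Hs with hbig | hex
    · rw [sat_BigOrF M _ hτ] at hbig
      have : Function.update (fun _ => a) 0 a 0 = a := Function.update_self _ _ _
      rw [this] at hbig
      omega
    · rw [sat_exsF] at hex
      obtain ⟨g, hagree, hsat⟩ := hex
      have hg0 : g 0 = a := by
        have := hagree 0 (by omega)
        rwa [Function.update_self] at this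
      rw [FO.sat] at hsat
      set F : Finset (Fin n) :=
        insert a ((Finset.range (m-1)).image (fun i0 => g (i0+2))) with hF
      have hFcard : F.card < m + 1 := by
        calc F.card ≤ _ + 1 := Finset.card_insert_le _ _
        _ ≤ (m-1) + 1 := by
            have := Finset.card_image_le (s := Finset.range (m-1)) (f := fun i0 => g (i0+2))
            simp only [Finset.card_range] at this
            omega
        _ < m + 1 := by omega
      obtain ⟨b, hbty, hbF⟩ := pick_avoid (by omega : m + 1 ≤ typeCount M (M a)) F hFcard
      have hb := (einner g b).1 (hsat b)
      rcases hb with hba | himp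
      · exact hbF (by rw [hF, hba, hg0]; exact Finset.mem_insert_self _ _)
      · obtain ⟨i, hi1, hi2, hi3⟩ := himp ⟨by rw [hg0]; exact hbty, by rw [hg0]; omega,
          by rw [hg0]; omega⟩
        apply hbF
        rw [hF]
        apply Finset.mem_insert_of_mem
        apply Finset.mem_image.2
        rw [hg0] at hi2
        exact ⟨i - 1, Finset.mem_range.2 (by omega), by rw [show i - 1 + 2 = i + 1 by omega]; exact hi3.symm⟩
  · intro H s a
    rw [matrixLe, FO.sat]
    have ha0 : Function.update s 0 a 0 = a := Function.update_self _ _ _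
    rcases H a with h0 | hrest
    · left; rw [sat_BigOrF M _ hτ, ha0]; exact Or.inl h0
    rcases hrest with hdd | hcnt
    · left; rw [sat_BigOrF M _ hτ, ha0]; exact Or.inr hdd
    · by_cases hddm : t (M a) = d
      · left; rw [sat_BigOrF M _ hτ, ha0]; exact Or.inr hddm
      right
      rw [sat_exsF]
      set m := t (M a) with hm
      by_cases h0 : m = 0
      · -- t (M a) = 0 : then typeCount ≤ 0 impossible since a realizes; but handle:
        exfalso
        have : 1 ≤ typeCount M (M a) := by
          rw [typeCount_eq]
          exact Finset.card_pos.2 ⟨a, mem_Rz.2 rfl⟩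
        omega
      have hm1 : 1 ≤ m := by omega
      have hmem : a ∈ Rz M (M a) := mem_Rz.2 rfl
      set l := ((Rz M (M a)).erase a).toList with hl
      have hlen : l.length ≤ m - 1 := by
        rw [hl, Finset.length_toList, Finset.card_erase_of_mem hmem]
        rw [typeCount_eq] at hcnt
        omega
      have hmd : m ≤ d - 1 := by have := htd (M a); omega
      set g : ℕ → Fin n := fun i =>
        if 2 ≤ i ∧ i - 2 < l.length then l.getD (i-2) a else Function.update s 0 a i
        with hgdef
      have hg0 : g 0 = a := by simp [hgdef]
      refine ⟨g, fun i hi => ?_, ?_⟩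
      · have hc : ¬(2 ≤ i ∧ i - 2 < l.length) := by
          intro ⟨hi2, hil⟩
          omega
        simp only [hgdef]
        rw [if_neg hc]
      · rw [FO.sat]
        intro b
        rw [einner g b]
        by_cases hba : b = a
        · left; rw [hg0, hba]
        · right
          rw [hg0]
          rintro ⟨hb1, _, hb3⟩
          have hbRz : b ∈ (Rz M (M a)).erase a := Finset.mem_erase.2 ⟨hba, mem_Rz.2 hb1⟩
          have hbl : b ∈ l := by rw [hl]; exact Finset.mem_toList.2 hbRz
          obtain ⟨i0, hi0, hget⟩ := List.mem_iff_getElem.1 hbl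
          refine ⟨i0 + 1, by omega, by omega, ?_⟩
          have hc : 2 ≤ i0 + 1 + 1 ∧ (i0 + 1 + 1) - 2 < l.length := ⟨by omega, by omega⟩
          simp only [hgdef]
          rw [if_pos hc, show i0 + 1 + 1 - 2 = i0 by omega, List.getD_eq_getElem l a hi0, hget]

end DC

namespace DC
open scoped Classical
variable {τ : Type} [Fintype τ]

noncomputable def RealL (t : Set τ → ℕ) : List (Set τ) :=
  (Finset.univ.filter (fun π => 1 ≤ t π)).toList

noncomputable def PhiReal (t : Set τ → ℕ) : FO τ :=
  bigAnd (FO.all 0 (FO.eq 0 0)) ((RealL t).map (fun π => FO.ex 2 (typeF π 2)))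

lemma Sat_PhiReal {n} (M : UModel τ n) (hτ : Nonempty τ) (t : Set τ → ℕ)
    (hpos : ∀ π, 1 ≤ t π → 0 < n) :
    Sat M (PhiReal t) ↔ ∀ π, 1 ≤ t π → ∃ b, M b = π := by
  constructor
  · intro H π hπ
    obtain ⟨a0⟩ : Nonempty (Fin n) := by
      have := hpos π hπ
      exact ⟨⟨0, this⟩⟩
    have hs := H (fun _ => a0)
    rw [PhiReal, sat_bigAnd M _ _ (by simp [FO.sat])] at hs
    have := hs (FO.ex 2 (typeF π 2))
      (by simp only [List.mem_map]; exact ⟨π, by simp [RealL, hπ], rfl⟩)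
    obtain ⟨b, hb⟩ := this
    rw [sat_typeF M _ hτ] at hb
    rw [Function.update_self] at hb
    exact ⟨b, hb⟩
  · intro H s
    rw [PhiReal, sat_bigAnd M _ _ (by simp [FO.sat])]
    intro φ hφ
    simp only [List.mem_map] at hφ
    obtain ⟨π, hπ, rfl⟩ := hφ
    have hπ1 : 1 ≤ t π := by simpa [RealL] using hπ
    obtain ⟨b, hb⟩ := H π hπ1
    refine ⟨b, ?_⟩
    rw [sat_typeF M _ hτ, Function.update_self]
    exact hb

noncomputable def phiMain (t : Set τ → ℕ) (d : ℕ) : FO τ :=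
  (PhiGe t d).and ((PhiLe t d).and (PhiReal t))

lemma Sat_and {n} (M : UModel τ n) (φ ψ : FO τ) :
    Sat M (φ.and ψ) ↔ Sat M φ ∧ Sat M ψ := by
  constructor
  · intro h; exact ⟨fun s => (h s).1, fun s => (h s).2⟩
  · intro h s; exact ⟨h.1 s, h.2 s⟩

lemma Sat_phiMain {n} (M : UModel τ n) (hτ : Nonempty τ) (t : Set τ → ℕ) (d : ℕ)
    (hd2 : 2 ≤ d) (htd : ∀ π, t π ≤ d) (hpos : ∀ π, 1 ≤ t π → 0 < n) :
    Sat M (phiMain t d) ↔ ∀ π, min (typeCount M π) d = t π := by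
  rw [phiMain, Sat_and, Sat_and, Sat_PhiGe M hτ t d hd2 htd, Sat_PhiLe M hτ t d hd2 htd,
    Sat_PhiReal M hτ t hpos]
  constructor
  · rintro ⟨hA, hB, hC⟩ π
    by_cases hzero : typeCount M π = 0
    · have ht0 : t π = 0 := by
        by_contra h
        obtain ⟨b, hb⟩ := hC π (by omega)
        have : b ∈ Rz M π := mem_Rz.2 hb
        have := Finset.card_pos.2 ⟨b, this⟩
        rw [typeCount_eq] at hzero
        omega
      rw [hzero, ht0]
      simp
    · obtain ⟨a, ha⟩ : ∃ a, M a = π := by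
        rw [typeCount_eq] at hzero
        have hp : 0 < (Rz M π).card := by omega
        obtain ⟨a, ha⟩ := Finset.card_pos.1 hp
        exact ⟨a, mem_Rz.1 ha⟩
      have hA' := hA a
      have hB' := hB a
      rw [ha] at hA' hB'
      rcases hB' with h0 | hd' | hle
      · omega
      · rw [hd']
        have : d ≤ typeCount M π := by omega
        omega
      · have := htd π
        omega
  · intro h
    refine ⟨fun a => ?_, fun a => ?_, fun π hπ => ?_⟩
    · have hπ := h (M a)
      have hge1 : 1 ≤ typeCount M (M a) := by
        rw [typeCount_eq]
        exact Finset.card_pos.2 ⟨a, mem_Rz.2 rfl⟩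
      constructor
      · omega
      · omega
    · have hπ := h (M a)
      have := htd (M a)
      by_cases hdd : t (M a) = d
      · exact Or.inr (Or.inl hdd)
      · right; right; omega
    · have hπ' := h π
      have : 1 ≤ typeCount M π := by omega
      rw [typeCount_eq] at this
      obtain ⟨b, hb⟩ := Finset.card_pos.1 this
      exact ⟨b, mem_Rz.1 hb⟩

end DC

namespace DC
open scoped Classical
variable {τ : Type} [Fintype τ]

-- ============ qrank ============

lemma qrank_bigAnd_le (b : FO τ) (q : ℕ) (hb : b.qrank ≤ q) :
    ∀ l : List (FO τ), (∀ φ ∈ l, φ.qrank ≤ q) → (bigAnd b l).qrank ≤ q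
  | [], _ => hb
  | [φ], h => h φ (by simp)
  | φ :: ψ :: l, h => by
    have ih := qrank_bigAnd_le b q hb (ψ :: l) (fun χ hχ => h χ (by simpa using Or.inr hχ))
    have h1 := h φ (by simp)
    simp only [bigAnd, FO.qrank]
    omega

lemma qrank_pairF (π : Set τ) : (pairF π).qrank = 0 := by
  simp [pairF, FO.qrank, qrank_typeF]

lemma qrank_npairF (π : Set τ) : (npairF π).qrank = 0 := by
  simp [npairF, FO.qrank, qrank_ntypeF]

lemma qrank_geCh (t : Set τ → ℕ) (d : ℕ) : ∀ c j, (geCh t d j c).qrank = 0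
  | 0, j => by
    rw [geCh]
    exact qrank_bigOr _ (by simp [FO.qrank]) _
      (fun φ hφ => by
        simp only [List.mem_map] at hφ; obtain ⟨π, _, rfl⟩ := hφ; exact qrank_pairF π)
  | c+1, j => by
    rw [geCh]
    have ih := qrank_geCh t d c (j+1)
    have hOr : (bigOr (FO.ne 0 0) ((SL t j).map pairF)).qrank = 0 :=
      qrank_bigOr _ (by simp [FO.qrank]) _
        (fun φ hφ => by
          simp only [List.mem_map] at hφ; obtain ⟨π, _, rfl⟩ := hφ; exact qrank_pairF π)
    by_cases h : (SL t j).isEmpty <;> simp [h, FO.qrank, ih, hOr]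

lemma qrank_neCh (t : Set τ → ℕ) : ∀ c j, (neCh t j c).qrank = 0
  | 0, j => by
    rw [neCh]
    exact qrank_bigAnd _ (by simp [FO.qrank]) _
      (fun φ hφ => by
        simp only [List.mem_map] at hφ; obtain ⟨π, _, rfl⟩ := hφ; exact qrank_npairF π)
  | c+1, j => by
    rw [neCh]
    have ih := qrank_neCh t c (j+1)
    have hAnd : (bigAnd (FO.eq 0 0) ((SL t j).map npairF)).qrank = 0 :=
      qrank_bigAnd _ (by simp [FO.qrank]) _
        (fun φ hφ => by
          simp only [List.mem_map] at hφ; obtain ⟨π, _, rfl⟩ := hφ; exact qrank_npairF π)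
    by_cases h : (SL t j).isEmpty <;> simp [h, FO.qrank, ih, hAnd]

lemma qrank_U1F (t : Set τ → ℕ) : (U1F t).qrank = 0 :=
  qrank_bigOr _ (by simp [FO.qrank]) _
    (fun φ hφ => by
      simp only [List.mem_map] at hφ; obtain ⟨π, _, rfl⟩ := hφ; exact qrank_typeF π 0)

lemma qrank_BigOrF (t : Set τ → ℕ) (d : ℕ) : (BigOrF t d).qrank = 0 :=
  qrank_bigOr _ (by simp [FO.qrank]) _
    (fun φ hφ => by
      simp only [List.mem_map] at hφ; obtain ⟨π, _, rfl⟩ := hφ; exact qrank_typeF π 0)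

lemma qrank_PhiGe (t : Set τ → ℕ) (d : ℕ) (hd2 : 2 ≤ d) : (PhiGe t d).qrank = d := by
  rw [PhiGe, FO.qrank, qrank_allsF]
  have : (matrixGe t d).qrank = 1 := by
    rw [matrixGe, FO.qrank, qrank_U1F]
    rw [FO.qrank, FO.qrank, FO.qrank, qrank_geCh]
    simp
  rw [this]; omega

lemma qrank_PhiLe (t : Set τ → ℕ) (d : ℕ) (hd2 : 2 ≤ d) : (PhiLe t d).qrank = d := by
  rw [PhiLe, FO.qrank, matrixLe, FO.qrank, qrank_BigOrF, qrank_exsF]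
  have : (FO.all 1 ((FO.eq 1 0).or (neCh t 1 (d-2)))).qrank = 1 := by
    rw [FO.qrank, FO.qrank, qrank_neCh]
    simp [FO.qrank]
  rw [this]; omega

lemma qrank_PhiReal (t : Set τ → ℕ) : (PhiReal t).qrank ≤ 1 := by
  rw [PhiReal]
  -- bigAnd of qrank ≤ 1 pieces
  have base : (FO.all 0 (FO.eq 0 0) : FO τ).qrank ≤ 1 := by simp [FO.qrank]
  have elts : ∀ φ ∈ (RealL t).map (fun π => FO.ex 2 (typeF π 2)), φ.qrank ≤ 1 := by
    intro φ hφ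
    simp only [List.mem_map] at hφ
    obtain ⟨π, _, rfl⟩ := hφ
    simp [FO.qrank, qrank_typeF]
  exact qrank_bigAnd_le _ 1 base _ elts

lemma qrank_phiMain (t : Set τ → ℕ) (d : ℕ) (hd2 : 2 ≤ d) : (phiMain t d).qrank ≤ d := by
  rw [phiMain, FO.qrank, FO.qrank, qrank_PhiGe t d hd2, qrank_PhiLe t d hd2]
  have := qrank_PhiReal t
  omega

end DC

namespace DC
open scoped Classical
variable {τ : Type} [Fintype τ]

lemma fv_bigAnd_ne (b : FO τ) (A : Finset ℕ) :
    ∀ l : List (FO τ), l ≠ [] → (∀ φ ∈ l, φ.freeVars ⊆ A) → (bigAnd b l).freeVars ⊆ A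
  | [], h, _ => absurd rfl h
  | [φ], _, h => h φ (by simp)
  | φ :: ψ :: l, _, h => by
    have ih := fv_bigAnd_ne b A (ψ :: l) (by simp) (fun χ hχ => h χ (by simpa using Or.inr hχ))
    simpa [bigAnd, FO.freeVars, Finset.union_subset_iff] using ⟨h φ (by simp), ih⟩

lemma fv_typeF_tight (hτ : Nonempty τ) (π : Set τ) (v : ℕ) :
    (typeF π v).freeVars ⊆ {v} := by
  apply fv_bigAnd_ne _ _ _ (by simp [predList_ne hτ])
  rintro φ hφ
  simp only [List.mem_map] at hφ
  obtain ⟨P, _, rfl⟩ := hφ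
  by_cases hmem : P ∈ π <;> simp [hmem, FO.freeVars]

lemma fv_pairF (π : Set τ) : (pairF π).freeVars ⊆ {0, 1} := by
  have h0 := fv_typeF π 0
  have h1 := fv_typeF π 1
  rw [pairF, FO.freeVars]
  apply Finset.union_subset
  · exact h0.trans (by
      intro x hx
      simp only [Finset.mem_insert, Finset.mem_singleton] at hx ⊢
      omega)
  · exact h1.trans (by
      intro x hx
      simp only [Finset.mem_insert, Finset.mem_singleton] at hx ⊢
      omega)

lemma fv_npairF (π : Set τ) : (npairF π).freeVars ⊆ {0, 1} := by
  have h0 := fv_ntypeF π 0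
  have h1 := fv_ntypeF π 1
  rw [npairF, FO.freeVars]
  apply Finset.union_subset
  · exact h0.trans (by
      intro x hx
      simp only [Finset.mem_insert, Finset.mem_singleton] at hx ⊢
      omega)
  · exact h1.trans (by
      intro x hx
      simp only [Finset.mem_insert, Finset.mem_singleton] at hx ⊢
      omega)

lemma fv_geCh (t : Set τ → ℕ) (d : ℕ) (hd2 : 2 ≤ d) :
    ∀ c j, j + c ≤ d → (geCh t d j c).freeVars ⊆ Finset.range d
  | 0, j, hj => by
    rw [geCh]
    apply fv_bigOr _ _ (by intro x; simp [FO.freeVars]; omega)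
    intro φ hφ
    simp only [List.mem_map] at hφ
    obtain ⟨π, _, rfl⟩ := hφ
    exact (fv_pairF π).trans (by intro x; simp; omega)
  | c+1, j, hj => by
    rw [geCh]
    have ih := fv_geCh t d hd2 c (j+1) (by omega)
    have hne : (FO.ne 1 j : FO τ).freeVars ⊆ Finset.range d := by
      intro x; simp [FO.freeVars]; omega
    have hOr : (bigOr (FO.ne 0 0) ((SL t j).map pairF)).freeVars ⊆ Finset.range d := by
      apply fv_bigOr _ _ (by intro x; simp [FO.freeVars]; omega)
      intro φ hφ
      simp only [List.mem_map] at hφ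
      obtain ⟨π, _, rfl⟩ := hφ
      exact (fv_pairF π).trans (by intro x; simp; omega)
    by_cases h : (SL t j).isEmpty
    · simp only [h, if_true, FO.freeVars]
      exact Finset.union_subset hne ih
    · simp only [h, if_false, FO.freeVars]
      exact Finset.union_subset hOr (Finset.union_subset hne ih)

lemma fv_neCh (t : Set τ → ℕ) (d : ℕ) (hd2 : 2 ≤ d) :
    ∀ c j, j + c ≤ d - 1 → (neCh t j c).freeVars ⊆ Finset.range d
  | 0, j, hj => by
    rw [neCh]
    apply fv_bigAnd _ _ (by intro x; simp [FO.freeVars]; omega)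
    intro φ hφ
    simp only [List.mem_map] at hφ
    obtain ⟨π, _, rfl⟩ := hφ
    exact (fv_npairF π).trans (by intro x; simp; omega)
  | c+1, j, hj => by
    rw [neCh]
    have ih := fv_neCh t d hd2 c (j+1) (by omega)
    have heq : (FO.eq 1 (j+1) : FO τ).freeVars ⊆ Finset.range d := by
      intro x; simp [FO.freeVars]; omega
    have hAnd : (bigAnd (FO.eq 0 0) ((SL t j).map npairF)).freeVars ⊆ Finset.range d := by
      apply fv_bigAnd _ _ (by intro x; simp [FO.freeVars]; omega)
      intro φ hφ
      simp only [List.mem_map] at hφ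
      obtain ⟨π, _, rfl⟩ := hφ
      exact (fv_npairF π).trans (by intro x; simp; omega)
    by_cases h : (SL t j).isEmpty
    · simp only [h, if_true, FO.freeVars]
      exact Finset.union_subset heq ih
    · simp only [h, if_false, FO.freeVars]
      exact Finset.union_subset hAnd (Finset.union_subset heq ih)

lemma fv_U1F (t : Set τ → ℕ) : (U1F t).freeVars ⊆ {0} := by
  apply fv_bigOr _ _ (by simp [FO.freeVars])
  intro φ hφ
  simp only [List.mem_map] at hφ
  obtain ⟨π, _, rfl⟩ := hφ
  exact (fv_typeF π 0).trans (by intro x; simp)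

lemma fv_BigOrF (t : Set τ → ℕ) (d : ℕ) : (BigOrF t d).freeVars ⊆ {0} := by
  apply fv_bigOr _ _ (by simp [FO.freeVars])
  intro φ hφ
  simp only [List.mem_map] at hφ
  obtain ⟨π, _, rfl⟩ := hφ
  exact (fv_typeF π 0).trans (by intro x; simp)

lemma fv_PhiGe (t : Set τ → ℕ) (d : ℕ) (hd2 : 2 ≤ d) : (PhiGe t d).freeVars = ∅ := by
  rw [PhiGe, FO.freeVars, fv_allsF]
  rw [Finset.eq_empty_iff_forall_notMem]
  intro x hx
  simp only [Finset.mem_sdiff, Finset.mem_singleton, Finset.mem_Ico] at hx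
  obtain ⟨⟨hx1, hx2⟩, hx3⟩ := hx
  -- x ∈ fv matrixGe, x ∉ [2, 2+(d-2)), x ≠ 0
  have hm : (matrixGe t d).freeVars ⊆ Finset.range d := by
    rw [matrixGe, FO.freeVars]
    apply Finset.union_subset
    · exact (fv_U1F t).trans (by intro y; simp; omega)
    · rw [FO.freeVars]
      have : ((FO.ne 1 0).and (geCh t d 2 (d-2))).freeVars ⊆ Finset.range d := by
        rw [FO.freeVars]
        apply Finset.union_subset
        · intro y; simp [FO.freeVars]; omega
        · exact fv_geCh t d hd2 (d-2) 2 (by omega)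
      exact (Finset.sdiff_subset).trans this
  have hx4 : (matrixGe t d).freeVars ⊆ insert 0 (Finset.Ico 2 d) := by
    rw [matrixGe, FO.freeVars]
    apply Finset.union_subset
    · exact (fv_U1F t).trans
        (by intro y hy; simp only [Finset.mem_singleton] at hy; simp [hy])
    · rw [FO.freeVars]
      intro y hy
      simp only [Finset.mem_sdiff, Finset.mem_singleton] at hy
      obtain ⟨hy1, hy2⟩ := hy
      have : y ∈ Finset.range d := by
        revert hy1
        have : ((FO.ne 1 0).and (geCh t d 2 (d-2))).freeVars ⊆ Finset.range d := by
          rw [FO.freeVars]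
          apply Finset.union_subset
          · intro z; simp [FO.freeVars]; omega
          · exact fv_geCh t d hd2 (d-2) 2 (by omega)
        intro hy1; exact this hy1
      simp only [Finset.mem_range] at this
      simp only [Finset.mem_insert, Finset.mem_Ico]
      omega
  have := hx4 hx1
  simp only [Finset.mem_insert, Finset.mem_Ico] at this
  omega

lemma fv_PhiLe (t : Set τ → ℕ) (d : ℕ) (hd2 : 2 ≤ d) : (PhiLe t d).freeVars = ∅ := by
  rw [PhiLe, FO.freeVars]
  rw [Finset.eq_empty_iff_forall_notMem]
  intro x hx
  simp only [Finset.mem_sdiff, Finset.mem_singleton] at hx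
  obtain ⟨hx1, hx2⟩ := hx
  have hm : (matrixLe t d).freeVars ⊆ {0} := by
    rw [matrixLe, FO.freeVars]
    apply Finset.union_subset (fv_BigOrF t d)
    rw [fv_exsF]
    intro y hy
    simp only [Finset.mem_sdiff, Finset.mem_Ico] at hy
    obtain ⟨hy1, hy2⟩ := hy
    have : y ∈ Finset.range d ∧ y ≠ 1 := by
      have hsub : (FO.all 1 ((FO.eq 1 0).or (neCh t 1 (d-2)))).freeVars ⊆
          (Finset.range d).erase 1 := by
        rw [FO.freeVars]
        intro z hz
        simp only [Finset.mem_sdiff, Finset.mem_singleton] at hz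
        obtain ⟨hz1, hz2⟩ := hz
        have : z ∈ Finset.range d := by
          revert hz1
          rw [FO.freeVars]
          intro hz1
          rcases Finset.mem_union.1 hz1 with h | h
          · simp only [FO.freeVars, Finset.mem_insert, Finset.mem_singleton] at h
            simp only [Finset.mem_range]
            omega
          · exact fv_neCh t d hd2 (d-2) 1 (by omega) h
        exact Finset.mem_erase.2 ⟨hz2, this⟩
      have := hsub hy1
      simp only [Finset.mem_erase] at this
      exact ⟨this.2, this.1⟩
    simp only [Finset.mem_range] at this
    simp only [Finset.mem_singleton]
    omega
  have := hm hx1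
  simp only [Finset.mem_singleton] at this
  omega

lemma fv_PhiReal (hτ : Nonempty τ) (t : Set τ → ℕ) : (PhiReal t).freeVars ⊆ ∅ := by
  apply fv_bigAnd _ _ (by simp [FO.freeVars])
  intro φ hφ
  simp only [List.mem_map] at hφ
  obtain ⟨π, _, rfl⟩ := hφ
  rw [FO.freeVars]
  intro x hx
  simp only [Finset.mem_sdiff, Finset.mem_singleton] at hx
  obtain ⟨hx1, hx2⟩ := hx
  have := fv_typeF_tight hτ π 2 hx1
  simp only [Finset.mem_singleton] at this
  omega

lemma sentence_phiMain (hτ : Nonempty τ) (t : Set τ → ℕ) (d : ℕ) (hd2 : 2 ≤ d) :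
    (phiMain t d).IsSentence := by
  rw [phiMain, FO.IsSentence, FO.freeVars, FO.freeVars]
  rw [fv_PhiGe t d hd2, fv_PhiLe t d hd2]
  have := fv_PhiReal hτ t
  rw [Finset.eq_empty_iff_forall_notMem]
  intro x hx
  simp only [Finset.mem_union, Finset.notMem_empty, false_or] at hx
  exact Finset.notMem_empty x (this hx)

end DC

namespace DC
open scoped Classical
variable {τ : Type} [Fintype τ]

lemma sum_sizes_map {α : Type*} (f : α → FO τ) (c : ℕ) :
    ∀ l : List α, (∀ a ∈ l, (f a).size + 1 = c) →
      ((l.map f).map FO.size).sum + l.length = c * l.length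
  | [], _ => by simp
  | a :: l, h => by
    have ih := sum_sizes_map f c l (fun x hx => h x (by simp [hx]))
    have ha := h a (by simp)
    simp only [List.map_cons, List.sum_cons, List.length_cons]
    rw [Nat.mul_succ]
    omega

lemma size_bigOr_map {α : Type*} (b : FO τ) (f : α → FO τ) (c : ℕ) (l : List α)
    (hc : ∀ a ∈ l, (f a).size + 1 = c) :
    (bigOr b (l.map f)).size + 1 ≤ max (b.size + 1) (c * l.length) := by
  rcases l with _ | ⟨a, l⟩
  · simp [bigOr]
  · have hne : ((a :: l).map f) ≠ [] := by simp
    have h1 := size_bigOr_nonempty b _ hne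
    have h2 := sum_sizes_map f c (a :: l) hc
    rw [List.length_map] at h1
    omega

lemma size_bigAnd_map {α : Type*} (b : FO τ) (f : α → FO τ) (c : ℕ) (l : List α)
    (hc : ∀ a ∈ l, (f a).size + 1 = c) :
    (bigAnd b (l.map f)).size + 1 ≤ max (b.size + 1) (c * l.length) := by
  rcases l with _ | ⟨a, l⟩
  · simp [bigAnd]
  · have hne : ((a :: l).map f) ≠ [] := by simp
    have h1 := size_bigAnd_nonempty b _ hne
    have h2 := sum_sizes_map f c (a :: l) hc
    rw [List.length_map] at h1
    omega

lemma max_le_add (a b : ℕ) : max a b ≤ a + b :=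
  max_le (Nat.le_add_right a b) (Nat.le_add_left b a)

lemma size_U1F_le (hτ : Nonempty τ) (t : Set τ → ℕ) :
    (U1F t).size ≤ 2 * Fintype.card τ * (Sf t 1).card + 1 := by
  rw [U1F]
  have h := size_bigOr_map (FO.ne 0 0) (fun π => typeF π 0) (2 * Fintype.card τ) (SL t 1)
    (fun π _ => size_typeF hτ π 0)
  rw [len_SL] at h
  have := max_le_add ((FO.ne 0 0 : FO τ).size + 1) (2 * Fintype.card τ * (Sf t 1).card)
  simp only [FO.size] at *
  omega

lemma size_BigOrF_le (hτ : Nonempty τ) (t : Set τ → ℕ) (d : ℕ) :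
    (BigOrF t d).size ≤
      2 * Fintype.card τ * (Finset.univ.filter (fun π => t π = 0 ∨ t π = d)).card + 1 := by
  rw [BigOrF]
  have h := size_bigOr_map (FO.ne 0 0) (fun π => typeF π 0) (2 * Fintype.card τ) (BigL t d)
    (fun π _ => size_typeF hτ π 0)
  have hlen : (BigL t d).length = (Finset.univ.filter (fun π => t π = 0 ∨ t π = d)).card := by
    simp [BigL]
  rw [hlen] at h
  have := max_le_add ((FO.ne 0 0 : FO τ).size + 1)
    (2 * Fintype.card τ * (Finset.univ.filter (fun π => t π = 0 ∨ t π = d)).card)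
  simp only [FO.size] at *
  omega

lemma card_split (t : Set τ → ℕ) (j hi : ℕ) (hj : j ≤ hi) :
    (Sf t j).card + (Finset.univ.filter (fun π => j + 1 ≤ t π ∧ t π ≤ hi)).card ≤
      (Finset.univ.filter (fun π => j ≤ t π ∧ t π ≤ hi)).card := by
  rw [← Finset.card_union_of_disjoint]
  · apply Finset.card_le_card
    intro π hπ
    simp only [Finset.mem_union, Sf, Finset.mem_filter, Finset.mem_univ, true_and] at hπ ⊢
    omega
  · rw [Finset.disjoint_left]
    intro π h1 h2
    simp only [Sf, Finset.mem_filter, Finset.mem_univ, true_and] at h1 h2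
    omega

lemma card_mono_filter (t : Set τ → ℕ) (j hi : ℕ) :
    (Finset.univ.filter (fun π => j + 1 ≤ t π ∧ t π ≤ hi)).card ≤
      (Finset.univ.filter (fun π => j ≤ t π ∧ t π ≤ hi)).card := by
  apply Finset.card_le_card
  intro π hπ
  simp only [Finset.mem_filter, Finset.mem_univ, true_and] at hπ ⊢
  omega

lemma size_geCh_le (hτ : Nonempty τ) (t : Set τ → ℕ) (d : ℕ) :
    ∀ c j, j + c = d →
      (geCh t d j c).size ≤
        2 * c + 4 * Fintype.card τ *
          (Finset.univ.filter (fun π => j ≤ t π ∧ t π ≤ d)).card + 1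
  | 0, j, hj => by
    rw [geCh]
    have h := size_bigOr_map (FO.ne 0 0) pairF (4 * Fintype.card τ) (SL t d)
      (fun π _ => size_pairF hτ π)
    rw [len_SL] at h
    have hsub : (Sf t d).card ≤
        (Finset.univ.filter (fun π => j ≤ t π ∧ t π ≤ d)).card := by
      apply Finset.card_le_card
      intro π hπ
      simp only [Sf, Finset.mem_filter, Finset.mem_univ, true_and] at hπ ⊢
      omega
    have hmax := max_le_add ((FO.ne 0 0 : FO τ).size + 1) (4 * Fintype.card τ * (Sf t d).card)
    have hk1 : 4 * Fintype.card τ * (Sf t d).card ≤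
        4 * Fintype.card τ * (Finset.univ.filter (fun π => j ≤ t π ∧ t π ≤ d)).card :=
      Nat.mul_le_mul_left _ hsub
    simp only [FO.size] at *
    omega
  | c+1, j, hj => by
    rw [geCh]
    have ih := size_geCh_le hτ t d c (j+1) (by omega)
    have hmono := card_mono_filter t j d
    have hsplit := card_split t j d (by omega)
    by_cases h : (SL t j).isEmpty
    · simp only [h, if_true, FO.size]
      have h1 : 4 * Fintype.card τ *
          (Finset.univ.filter (fun π => j + 1 ≤ t π ∧ t π ≤ d)).card ≤
          4 * Fintype.card τ *
          (Finset.univ.filter (fun π => j ≤ t π ∧ t π ≤ d)).card :=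
        Nat.mul_le_mul_left _ hmono
      omega
    · simp only [h, Bool.false_eq_true, if_false, FO.size]
      have hne : (SL t j).map pairF ≠ [] := by
        simp only [ne_eq, List.map_eq_nil_iff]
        intro hc; rw [← List.isEmpty_iff] at hc; exact h hc
      have hsz := size_bigOr_nonempty (FO.ne 0 0) _ hne
      have hsum := sum_sizes_map pairF (4 * Fintype.card τ) (SL t j)
        (fun π _ => size_pairF hτ π)
      rw [List.length_map] at hsz
      rw [len_SL] at hsz hsum
      -- (bigOr).size + 1 = 4k * (Sf t j).card
      have hkey : 4 * Fintype.card τ * (Sf t j).card +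
          4 * Fintype.card τ *
            (Finset.univ.filter (fun π => j + 1 ≤ t π ∧ t π ≤ d)).card ≤
          4 * Fintype.card τ *
            (Finset.univ.filter (fun π => j ≤ t π ∧ t π ≤ d)).card := by
        rw [← Nat.mul_add]
        exact Nat.mul_le_mul_left _ hsplit
      omega

lemma size_neCh_le (hτ : Nonempty τ) (t : Set τ → ℕ) (d : ℕ) :
    ∀ c j, j + c = d - 1 →
      (neCh t j c).size ≤
        2 * c + 4 * Fintype.card τ *
          (Finset.univ.filter (fun π => j ≤ t π ∧ t π ≤ d - 1)).card + 1
  | 0, j, hj => by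
    rw [neCh]
    have h := size_bigAnd_map (FO.eq 0 0) npairF (4 * Fintype.card τ) (SL t j)
      (fun π _ => size_npairF hτ π)
    rw [len_SL] at h
    have hsub : (Sf t j).card ≤
        (Finset.univ.filter (fun π => j ≤ t π ∧ t π ≤ d - 1)).card := by
      apply Finset.card_le_card
      intro π hπ
      simp only [Sf, Finset.mem_filter, Finset.mem_univ, true_and] at hπ ⊢
      omega
    have hmax := max_le_add ((FO.eq 0 0 : FO τ).size + 1) (4 * Fintype.card τ * (Sf t j).card)
    have hk1 : 4 * Fintype.card τ * (Sf t j).card ≤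
        4 * Fintype.card τ * (Finset.univ.filter (fun π => j ≤ t π ∧ t π ≤ d - 1)).card :=
      Nat.mul_le_mul_left _ hsub
    simp only [FO.size] at *
    omega
  | c+1, j, hj => by
    rw [neCh]
    have ih := size_neCh_le hτ t d c (j+1) (by omega)
    have hmono := card_mono_filter t j (d-1)
    have hsplit := card_split t j (d-1) (by omega)
    by_cases h : (SL t j).isEmpty
    · simp only [h, if_true, FO.size]
      have h1 : 4 * Fintype.card τ *
          (Finset.univ.filter (fun π => j + 1 ≤ t π ∧ t π ≤ d - 1)).card ≤
          4 * Fintype.card τ *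
          (Finset.univ.filter (fun π => j ≤ t π ∧ t π ≤ d - 1)).card :=
        Nat.mul_le_mul_left _ hmono
      omega
    · simp only [h, Bool.false_eq_true, if_false, FO.size]
      have hne : (SL t j).map npairF ≠ [] := by
        simp only [ne_eq, List.map_eq_nil_iff]
        intro hc; rw [← List.isEmpty_iff] at hc; exact h hc
      have hsz := size_bigAnd_nonempty (FO.eq 0 0) _ hne
      have hsum := sum_sizes_map npairF (4 * Fintype.card τ) (SL t j)
        (fun π _ => size_npairF hτ π)
      rw [List.length_map] at hsz
      rw [len_SL] at hsz hsum
      have hkey : 4 * Fintype.card τ * (Sf t j).card +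
          4 * Fintype.card τ *
            (Finset.univ.filter (fun π => j + 1 ≤ t π ∧ t π ≤ d - 1)).card ≤
          4 * Fintype.card τ *
            (Finset.univ.filter (fun π => j ≤ t π ∧ t π ≤ d - 1)).card := by
        rw [← Nat.mul_add]
        exact Nat.mul_le_mul_left _ hsplit
      omega

end DC

namespace DC
open scoped Classical
variable {τ : Type} [Fintype τ]

lemma size_PhiGe_le (hτ : Nonempty τ) (t : Set τ → ℕ) (d : ℕ) (hd2 : 2 ≤ d) :
    (PhiGe t d).size ≤ 3 * d + 2 * Fintype.card τ * (Sf t 1).card +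
      4 * Fintype.card τ * (Finset.univ.filter (fun π => 2 ≤ t π ∧ t π ≤ d)).card + 1 := by
  rw [PhiGe, FO.size, size_allsF, matrixGe]
  simp only [FO.size]
  have h1 := size_U1F_le hτ t
  have h2 := size_geCh_le hτ t d (d-2) 2 (by omega)
  omega

lemma size_PhiLe_le (hτ : Nonempty τ) (t : Set τ → ℕ) (d : ℕ) (hd2 : 2 ≤ d) :
    (PhiLe t d).size ≤ 3 * d +
      2 * Fintype.card τ * (Finset.univ.filter (fun π => t π = 0 ∨ t π = d)).card +
      4 * Fintype.card τ * (Finset.univ.filter (fun π => 1 ≤ t π ∧ t π ≤ d - 1)).card + 1 := by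
  rw [PhiLe, FO.size, matrixLe]
  simp only [FO.size, size_exsF]
  have h1 := size_BigOrF_le hτ t d
  have h2 := size_neCh_le hτ t d (d-2) 1 (by omega)
  omega

lemma size_PhiReal_le (hτ : Nonempty τ) (t : Set τ → ℕ) :
    (PhiReal t).size + 1 ≤
      max 3 ((2 * Fintype.card τ + 1) * (Finset.univ.filter (fun π => 1 ≤ t π)).card) := by
  rw [PhiReal]
  have h := size_bigAnd_map (FO.all 0 (FO.eq 0 0)) (fun π => FO.ex 2 (typeF π 2))
    (2 * Fintype.card τ + 1) (RealL t)
    (fun π _ => by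
      have := size_typeF hτ π 2
      simp only [FO.size]
      omega)
  have hlen : (RealL t).length = (Finset.univ.filter (fun π => 1 ≤ t π)).card := by
    simp [RealL]
  rw [hlen] at h
  simp only [FO.size] at h
  exact h

lemma key_arith (k V Mid D Z K2 : ℕ) (hk : 1 ≤ k) (hKeq : Z + V + Mid + D = K2)
    (hK2 : 2 ≤ K2) :
    2*k*V + 4*k*(Mid+D) + 2*k*(Z+D) + 4*k*(V+Mid) + (2*k+1)*(V+Mid+D) + 8 ≤ 15*k*K2 := by
  have e : 15*k*K2 = 15*(k*Z) + 15*(k*V) + 15*(k*Mid) + 15*(k*D) := by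
    rw [← hKeq]; ring
  have eL : 2*k*V + 4*k*(Mid+D) + 2*k*(Z+D) + 4*k*(V+Mid) + (2*k+1)*(V+Mid+D) + 8 =
      8*(k*V) + 10*(k*Mid) + 8*(k*D) + 2*(k*Z) + (V + Mid + D) + 8 := by ring
  rw [e, eL]
  have hV : V ≤ k*V := Nat.le_mul_of_pos_left V hk
  have hMid : Mid ≤ k*Mid := Nat.le_mul_of_pos_left Mid hk
  have hD : D ≤ k*D := Nat.le_mul_of_pos_left D hk
  have hZ : Z ≤ k*Z := Nat.le_mul_of_pos_left Z hk
  rcases Nat.eq_zero_or_pos Z with hz | hz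
  · subst hz
    -- V + Mid + D = K2 ≥ 2
    have hsum : 2 ≤ V + Mid + D := by omega
    nlinarith [hV, hMid, hD]
  · have h13 : 13 ≤ 13 * (k*Z) := by
      have : 1 ≤ k * Z := Nat.one_le_iff_ne_zero.2 (by positivity)
      omega
    nlinarith [hV, hMid, hD]

end DC

namespace DC
open scoped Classical
variable {τ : Type} [Fintype τ]

lemma size_phiMain_le (hτ : Nonempty τ) (t : Set τ → ℕ) (d : ℕ) (hd2 : 2 ≤ d)
    (htd : ∀ π, t π ≤ d) :
    (phiMain t d).size ≤ 6 * d - 3 + 15 * Fintype.card τ * 2 ^ Fintype.card τ := by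
  set k := Fintype.card τ with hkdef
  have hk : 1 ≤ k := Fintype.card_pos
  set Z := (Finset.univ.filter (fun π => t π = 0)).card with hZ
  set V := (Sf t 1).card with hV
  set Mid := (Finset.univ.filter (fun π => 2 ≤ t π ∧ t π ≤ d - 1)).card with hMid
  set D := (Sf t d).card with hD
  -- partition identities
  have hcardU : (Finset.univ : Finset (Set τ)).card = 2 ^ k := by
    rw [Finset.card_univ]
    simp [hkdef]
  have step1 : Z + (Finset.univ.filter (fun π => 1 ≤ t π)).card = 2 ^ k := by
    rw [← hcardU, hZ]
    have := Finset.card_filter_add_card_filter_not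
      (s := (Finset.univ : Finset (Set τ))) (p := fun π => t π = 0)
    rw [← this]
    congr 1
    apply congrArg Finset.card
    apply Finset.filter_congr
    intro π _
    constructor
    · intro h; omega
    · intro h; omega
  have step2 : (Finset.univ.filter (fun π => 1 ≤ t π)).card =
      V + (Finset.univ.filter (fun π => 2 ≤ t π ∧ t π ≤ d)).card := by
    have := Finset.card_filter_add_card_filter_not
      (s := Finset.univ.filter (fun π => 1 ≤ t π)) (p := fun π => t π = 1)
    rw [← this]
    congr 1
    · rw [Finset.filter_filter, hV, Sf]
      congr 1
      apply Finset.filter_congr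
      intro π _
      constructor
      · intro h; exact h.2
      · intro h; exact ⟨by omega, h⟩
    · rw [Finset.filter_filter]
      apply congrArg Finset.card
      apply Finset.filter_congr
      intro π _
      have := htd π
      constructor
      · intro h; omega
      · intro h; omega
  have step3 : (Finset.univ.filter (fun π => 2 ≤ t π ∧ t π ≤ d)).card = Mid + D := by
    have := Finset.card_filter_add_card_filter_not
      (s := Finset.univ.filter (fun π => 2 ≤ t π ∧ t π ≤ d)) (p := fun π => t π = d)
    rw [← this]
    rw [Nat.add_comm Mid D]
    congr 1
    · rw [Finset.filter_filter, hD, Sf]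
      congr 1
      apply Finset.filter_congr
      intro π _
      constructor
      · intro h; exact h.2
      · intro h; exact ⟨by omega, h⟩
    · rw [Finset.filter_filter, hMid]
      congr 1
      apply Finset.filter_congr
      intro π _
      constructor
      · intro h; omega
      · intro h; omega
  have hKeq : Z + V + Mid + D = 2 ^ k := by omega
  have hK2 : 2 ≤ 2 ^ k := by
    calc (2:ℕ) = 2 ^ 1 := by norm_num
    _ ≤ 2 ^ k := Nat.pow_le_pow_right (by norm_num) hk
  -- bound on Bg
  have hBg : (Finset.univ.filter (fun π => t π = 0 ∨ t π = d)).card ≤ Z + D := by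
    rw [hZ, hD, Sf]
    calc (Finset.univ.filter (fun π => t π = 0 ∨ t π = d)).card ≤
        ((Finset.univ.filter (fun π => t π = 0)) ∪
          (Finset.univ.filter (fun π => t π = d))).card := by
          apply Finset.card_le_card
          intro π hπ
          simp only [Finset.mem_filter, Finset.mem_univ, true_and, Finset.mem_union] at hπ ⊢
          exact hπ
    _ ≤ _ := Finset.card_union_le _ _
  have hLE1 : (Finset.univ.filter (fun π => 1 ≤ t π ∧ t π ≤ d - 1)).card ≤ V + Mid := by
    rw [hV, hMid, Sf]
    calc (Finset.univ.filter (fun π => 1 ≤ t π ∧ t π ≤ d - 1)).card ≤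
        ((Finset.univ.filter (fun π => t π = 1)) ∪
          (Finset.univ.filter (fun π => 2 ≤ t π ∧ t π ≤ d - 1))).card := by
          apply Finset.card_le_card
          intro π hπ
          simp only [Finset.mem_filter, Finset.mem_univ, true_and, Finset.mem_union] at hπ ⊢
          omega
    _ ≤ _ := Finset.card_union_le _ _
  have hRl : (Finset.univ.filter (fun π => 1 ≤ t π)).card = V + Mid + D := by omega
  -- component bounds
  have hGe := size_PhiGe_le hτ t d hd2
  have hLe := size_PhiLe_le hτ t d hd2
  have hRe := size_PhiReal_le hτ t
  rw [← hkdef] at hGe hLe hRe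
  rw [← hV] at hGe
  rw [step3] at hGe
  rw [hRl] at hRe
  -- assemble
  have hS : (phiMain t d).size =
      (PhiGe t d).size + ((PhiLe t d).size + (PhiReal t).size + 1) + 1 := by
    simp [phiMain, FO.size]
  have hLe' : (PhiLe t d).size ≤ 3 * d + 2 * k * (Z + D) + 4 * k * (V + Mid) + 1 := by
    have h1 : 2 * k * (Finset.univ.filter (fun π => t π = 0 ∨ t π = d)).card ≤
        2 * k * (Z + D) := Nat.mul_le_mul_left _ hBg
    have h2 : 4 * k * (Finset.univ.filter (fun π => 1 ≤ t π ∧ t π ≤ d - 1)).card ≤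
        4 * k * (V + Mid) := Nat.mul_le_mul_left _ hLE1
    omega
  -- PhiReal bound
  rcases Nat.eq_zero_or_pos (V + Mid + D) with hRl0 | hRlpos
  · -- no realized types
    have hV0 : V = 0 := by omega
    have hMid0 : Mid = 0 := by omega
    have hD0 : D = 0 := by omega
    have hMD0 : Mid + D = 0 := by omega
    have hVM0 : V + Mid = 0 := by omega
    have hf : 2*k*V = 0 := by rw [hV0, Nat.mul_zero]
    have hg : 4*k*(Mid+D) = 0 := by rw [hMD0, Nat.mul_zero]
    have ho : 2*k*(Z+D) = 2*k*Z := by rw [hD0, Nat.add_zero]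
    have hp : 4*k*(V+Mid) = 0 := by rw [hVM0, Nat.mul_zero]
    have hRe' : (PhiReal t).size ≤ 2 := by
      rw [hRl0, Nat.mul_zero] at hRe
      simp only [Nat.max_zero] at hRe
      omega
    have hZK : Z = 2 ^ k := by omega
    have hkZ : 2 ≤ k * Z := by
      rw [hZK]
      calc (2:ℕ) = 1 * 2 := by norm_num
      _ ≤ k * 2 ^ k := Nat.mul_le_mul hk hK2
    have h2kZ : 2*k*Z = 2*(k*Z) := by ring
    have hfin : 15 * k * 2 ^ k = 15 * (k*Z) := by rw [hZK]; ring
    omega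
  · have hmax : (3:ℕ) ≤ (2 * k + 1) * (V + Mid + D) := by
      calc (3:ℕ) ≤ (2 * 1 + 1) * 1 := by norm_num
      _ ≤ (2 * k + 1) * (V + Mid + D) := Nat.mul_le_mul (by omega) hRlpos
    have hRe' : (PhiReal t).size + 1 ≤ (2 * k + 1) * (V + Mid + D) := by
      rcases max_cases 3 ((2 * k + 1) * (V + Mid + D)) with ⟨heq, _⟩ | ⟨heq, _⟩ <;> omega
    have hkey := key_arith k V Mid D Z (2 ^ k) hk hKeq hK2
    have hgoal : (phiMain t d).size + 3 ≤ 6 * d + 15 * k * 2 ^ k := by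
      have e1 : 2 * k * V + 4 * k * (Mid + D) + 2 * k * (Z + D) + 4 * k * (V + Mid) +
          (2 * k + 1) * (V + Mid + D) + 8 ≤ 15 * k * 2 ^ k := hkey
      omega
    omega

end DC

namespace DC
open scoped Classical
variable {τ : Type} [Fintype τ]

noncomputable def phiOne (t : Set τ → ℕ) : FO τ :=
  (FO.all 0 (U1F t)).and (PhiReal t)

lemma Sat_phiOne {n} (M : UModel τ n) (hτ : Nonempty τ) (t : Set τ → ℕ)
    (ht1 : ∀ π, t π ≤ 1) (hpos : ∀ π, 1 ≤ t π → 0 < n) :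
    Sat M (phiOne t) ↔ ∀ π, min (typeCount M π) 1 = t π := by
  rw [phiOne, Sat_and]
  have hAll : Sat M (FO.all 0 (U1F t)) ↔ ∀ a : Fin n, t (M a) = 1 := by
    constructor
    · intro H a
      have := H (fun _ => a) a
      rw [sat_U1F M _ hτ, Function.update_self] at this
      exact this
    · intro H s a
      rw [sat_U1F M _ hτ, Function.update_self]
      exact H a
  rw [hAll, Sat_PhiReal M hτ t hpos]
  constructor
  · rintro ⟨hU, hR⟩ π
    by_cases hzero : typeCount M π = 0
    · have ht0 : t π = 0 := by
        by_contra h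
        obtain ⟨b, hb⟩ := hR π (by omega)
        have : b ∈ Rz M π := mem_Rz.2 hb
        have := Finset.card_pos.2 ⟨b, this⟩
        rw [typeCount_eq] at hzero
        omega
      rw [hzero, ht0]
      simp
    · obtain ⟨a, ha⟩ : ∃ a, M a = π := by
        rw [typeCount_eq] at hzero
        have hp : 0 < (Rz M π).card := by omega
        obtain ⟨a, ha⟩ := Finset.card_pos.1 hp
        exact ⟨a, mem_Rz.1 ha⟩
      have := hU a

      rw [ha] at this
      rw [this]
      omega
  · intro h
    constructor
    · intro a
      have hπ := h (M a)
      have hge1 : 1 ≤ typeCount M (M a) := by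
        rw [typeCount_eq]
        exact Finset.card_pos.2 ⟨a, mem_Rz.2 rfl⟩
      omega
    · intro π hπ
      have := h π
      have hc : 1 ≤ typeCount M π := by omega
      rw [typeCount_eq] at hc
      obtain ⟨b, hb⟩ := Finset.card_pos.1 hc
      exact ⟨b, mem_Rz.1 hb⟩

lemma qrank_phiOne (t : Set τ → ℕ) : (phiOne t).qrank ≤ 1 := by
  rw [phiOne, FO.qrank, FO.qrank, qrank_U1F]
  have := qrank_PhiReal t
  omega

lemma sentence_phiOne (hτ : Nonempty τ) (t : Set τ → ℕ) : (phiOne t).IsSentence := by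
  rw [phiOne, FO.IsSentence, FO.freeVars, FO.freeVars]
  have h1 := fv_U1F t
  have h2 := fv_PhiReal hτ t
  rw [Finset.eq_empty_iff_forall_notMem]
  intro x hx
  rcases Finset.mem_union.1 hx with h | h
  · rw [Finset.mem_sdiff] at h
    have := h1 h.1
    simp only [Finset.mem_singleton] at this h
    exact h.2 (by simp [this])
  · exact Finset.notMem_empty x (h2 h)

lemma size_phiOne_le (hτ : Nonempty τ) (t : Set τ → ℕ) :
    (phiOne t).size ≤ 3 + 15 * Fintype.card τ * 2 ^ Fintype.card τ := by
  set k := Fintype.card τ with hkdef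
  have hk : 1 ≤ k := Fintype.card_pos
  have hK2 : 2 ≤ 2 ^ k := by
    calc (2:ℕ) = 2 ^ 1 := by norm_num
    _ ≤ 2 ^ k := Nat.pow_le_pow_right (by norm_num) hk
  have hU := size_U1F_le hτ t
  have hRe := size_PhiReal_le hτ t
  rw [← hkdef] at hU hRe
  have hcardU : Fintype.card (Set τ) = 2 ^ k := by simp [hkdef]
  have hVK : (Sf t 1).card ≤ 2 ^ k := by
    have := Finset.card_le_univ (Sf t 1)
    omega
  have hRK : (Finset.univ.filter (fun π => 1 ≤ t π)).card ≤ 2 ^ k := by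
    have := Finset.card_le_univ (Finset.univ.filter (fun π => 1 ≤ t π))
    omega
  have b1 : 2*k*(Sf t 1).card ≤ 2*k*2^k := Nat.mul_le_mul_left _ hVK
  have b2 : (2*k+1)*(Finset.univ.filter (fun π => 1 ≤ t π)).card ≤ (2*k+1)*2^k :=
    Nat.mul_le_mul_left _ hRK
  have hmax := max_le_add 3 ((2*k+1)*(Finset.univ.filter (fun π => 1 ≤ t π)).card)
  have hbig : 2*k*2^k + (2*k+1)*2^k + 5 ≤ 3 + 15*k*2^k := by
    nlinarith [hk, hK2]
  rw [phiOne]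
  simp only [FO.size]
  omega

end DC


/-- For every positive integer `d` and every `τ`-model `M` of size `n`,
`C_d(M) ≤ 6d − 3 + c_τ`. -/
theorem descCompD_le_global (τ : Type) [Fintype τ] {n d : ℕ} (hd : 1 ≤ d)
    (M : UModel τ n) :
    descCompD d M ≤ 6 * d - 3 + cTau τ := by
  classical
  have step : ∀ φ : FO τ, φ.IsSentence → φ.qrank ≤ d → DefinesD d φ M →
      φ.size ≤ 6 * d - 3 + cTau τ → descCompD d M ≤ 6 * d - 3 + cTau τ := by
    intro φ h1 h2 h3 h4
    exact le_trans (Nat.sInf_le ⟨φ, h1, h2, h3, rfl⟩) h4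
  by_cases hk0 : Fintype.card τ = 0
  · apply step (FO.all 0 (FO.eq 0 0))
    · rw [FO.IsSentence, FO.freeVars, FO.freeVars]
      simp
    · simp [FO.qrank]
      omega
    · intro M'
      have hemp : IsEmpty τ := Fintype.card_eq_zero_iff.1 hk0
      have hall : ∀ (m : UModel τ n) (π : Set τ), typeCount m π = n := by
        intro m π
        have hset : {a : Fin n | m a = π} = Set.univ := by
          ext a
          simp only [Set.mem_setOf_eq, Set.mem_univ, iff_true]
          ext x
          exact (hemp.false x).elim
        rw [typeCount, hset, Set.ncard_univ]
        simp
      constructor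
      · intro _ π
        rw [hall M' π, hall M π]
      · intro _ s a
        rfl
    · have hsz : (FO.all 0 (FO.eq 0 0) : FO τ).size = 2 := rfl
      rw [hsz]
      omega
  · have hτ : Nonempty τ := Fintype.card_pos_iff.1 (Nat.pos_of_ne_zero hk0)
    set t : Set τ → ℕ := fun π => min (typeCount M π) d with htdef
    have htd : ∀ π, t π ≤ d := fun π => min_le_right _ _
    have hpos : ∀ π, 1 ≤ t π → 0 < n := by
      intro π h
      have h1 : 1 ≤ typeCount M π := le_trans h (min_le_left _ _)
      rw [DC.typeCount_eq] at h1
      obtain ⟨a, _⟩ := Finset.card_pos.1 h1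
      exact a.pos
    have hcT : cTau τ = 15 * Fintype.card τ * 2 ^ Fintype.card τ := rfl
    by_cases hd1 : d = 1
    · subst hd1
      apply step (DC.phiOne t)
      · exact DC.sentence_phiOne hτ t
      · exact DC.qrank_phiOne t
      · intro M'
        exact DC.Sat_phiOne M' hτ t htd hpos
      · have := DC.size_phiOne_le hτ t
        rw [hcT]
        simpa using this
    · have hd2 : 2 ≤ d := by omega
      apply step (DC.phiMain t d)
      · exact DC.sentence_phiMain hτ t d hd2
      · exact DC.qrank_phiMain t d hd2
      · intro M'
        exact DC.Sat_phiMain M' hτ t d hd2 htd hpos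
      · rw [hcT]
        exact DC.size_phiMain_le hτ t d hd2 htd
end

section
/- Let τ be a finite monadic vocabulary, let M be a τ-model of size n realizing ℓ ≥ 2 types π₁,…,π_ℓ, enumerated in ascending order of their numbers of realizing points, and let M' be the τ-model obtained from M by changing the type of one point from π_{ℓ-1} to π_ℓ. Then every FO[τ] sentence φ with M ⊨ φ and M' ⊭ φ contains at least |π_{ℓ-1}|_M quantifier occurrences. -/
/-!
Common definitions: unary (monadic) first-order structures, FO[τ] formulas in
negation normal form, formula size / quantifier rank / number of quantifiers,
semantics, description complexity, the equivalence `≡_d`, and the entropies.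
-/

open Filter

section QLB
variable {τ : Type} {n : ℕ}

/-- Invariant for the EF-style induction. -/
structure QInv (M₁ M₂ : UModel τ n) (d : ℕ) (F : Finset ℕ) (s₁ s₂ : ℕ → Fin n) : Prop where
  tp : ∀ x ∈ F, M₁ (s₁ x) = M₂ (s₂ x)
  eqv : ∀ x ∈ F, ∀ y ∈ F, (s₁ x = s₁ y ↔ s₂ x = s₂ y)
  cnt : ∀ σ : Set τ, min (typeCount M₁ σ) (d + F.card) = min (typeCount M₂ σ) (d + F.card)

lemma QInv.symm {M₁ M₂ : UModel τ n} {d F s₁ s₂} (h : QInv M₁ M₂ d F s₁ s₂) :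
    QInv M₂ M₁ d F s₂ s₁ :=
  ⟨fun x hx => (h.tp x hx).symm, fun x hx y hy => (h.eqv x hx y hy).symm,
   fun σ => (h.cnt σ).symm⟩

lemma QInv.extend {M₁ M₂ : UModel τ n} {d : ℕ} {F : Finset ℕ} {s₁ s₂ : ℕ → Fin n}
    (h : QInv M₁ M₂ (d + 1) F s₁ s₂) (x : ℕ) (a : Fin n) :
    ∃ b : Fin n, QInv M₁ M₂ d (insert x F)
      (Function.update s₁ x a) (Function.update s₂ x b) := by
  classical
  have hcard : d + (insert x F).card ≤ (d + 1) + F.card := by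
    have := Finset.card_insert_le x F; omega
  have hcnt : ∀ σ : Set τ, min (typeCount M₁ σ) (d + (insert x F).card)
      = min (typeCount M₂ σ) (d + (insert x F).card) := by
    intro σ; have := h.cnt σ; omega
  by_cases hp : ∃ y ∈ F, y ≠ x ∧ s₁ y = a
  · obtain ⟨y, hy, hyx, hsy⟩ := hp
    refine ⟨s₂ y, ?_, ?_, hcnt⟩
    · intro z hz
      by_cases hzx : z = x
      · subst hzx
        simp only [Function.update_self]
        rw [← hsy]; exact h.tp y hy
      · simp only [Function.update_of_ne hzx]
        exact h.tp z ((Finset.mem_insert.mp hz).resolve_left hzx)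
    · intro z hz w hw
      by_cases hzx : z = x <;> by_cases hwx : w = x
      · subst hzx; subst hwx; simp
      · subst hzx
        have hw' : w ∈ F := (Finset.mem_insert.mp hw).resolve_left hwx
        simp only [Function.update_self, Function.update_of_ne hwx]
        rw [← hsy]; exact h.eqv y hy w hw'
      · subst hwx
        have hz' : z ∈ F := (Finset.mem_insert.mp hz).resolve_left hzx
        simp only [Function.update_self, Function.update_of_ne hzx]
        rw [← hsy]; exact h.eqv z hz' y hy
      · simp only [Function.update_of_ne hzx, Function.update_of_ne hwx]
        exact h.eqv z ((Finset.mem_insert.mp hz).resolve_left hzx)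
          w ((Finset.mem_insert.mp hw).resolve_left hwx)
  · -- fresh point
    push_neg at hp
    set σ : Set τ := M₁ a with hσ
    set PM : Set (Fin n) := {p | M₁ p = σ ∧ ∃ y ∈ F, y ≠ x ∧ s₁ y = p} with hPM
    set PM' : Set (Fin n) := {p | M₂ p = σ ∧ ∃ y ∈ F, y ≠ x ∧ s₂ y = p} with hPM'
    have haPM : a ∉ PM := by
      rintro ⟨-, y, hy, hyx, hsy⟩; exact hp y hy hyx hsy
    have h1 : PM.ncard < typeCount M₁ σ := by
      apply Set.ncard_lt_ncard _ (Set.toFinite _)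
      constructor
      · rintro p ⟨hpσ, -⟩; exact hpσ
      · intro hsub; exact haPM (hsub rfl)
    have h2 : PM.ncard ≤ F.card := by
      have : PM ⊆ ↑(F.image s₁) := by
        rintro p ⟨-, y, hy, -, hsy⟩
        exact Finset.mem_coe.mpr (Finset.mem_image.mpr ⟨y, hy, hsy⟩)
      calc PM.ncard ≤ (↑(F.image s₁) : Set (Fin n)).ncard :=
            Set.ncard_le_ncard this (Set.toFinite _)
        _ = (F.image s₁).card := Set.ncard_coe_finset _
        _ ≤ F.card := Finset.card_image_le
    have h3 : PM'.ncard ≤ PM.ncard := by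
      have hch : ∀ q : Fin n, q ∈ PM' → ∃ y, y ∈ F ∧ y ≠ x ∧ s₂ y = q := by
        rintro q ⟨-, y, hy, hyx, hsy⟩; exact ⟨y, hy, hyx, hsy⟩
      classical
      set f : Fin n → Fin n := fun q =>
        if hq : ∃ y, y ∈ F ∧ y ≠ x ∧ s₂ y = q then s₁ hq.choose else q with hf
      have hmaps : ∀ q ∈ PM', f q ∈ PM := by
        intro q hq
        have hqσ : M₂ q = σ := hq.1
        have hex := hch q hq
        simp only [hf, dif_pos hex]
        obtain ⟨hy, hyx, hsy⟩ := hex.choose_spec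
        refine ⟨?_, hex.choose, hy, hyx, rfl⟩
        rw [h.tp _ hy, hsy, hqσ]
      have hinj : Set.InjOn f PM' := by
        intro q₁ hq₁ q₂ hq₂ hfq
        have he₁ := hch q₁ hq₁
        have he₂ := hch q₂ hq₂
        simp only [hf, dif_pos he₁, dif_pos he₂] at hfq
        obtain ⟨hy₁, -, hsy₁⟩ := he₁.choose_spec
        obtain ⟨hy₂, -, hsy₂⟩ := he₂.choose_spec
        rw [← hsy₁, ← hsy₂]
        exact congrArg s₂ (rfl) ▸ ((h.eqv _ hy₁ _ hy₂).mp hfq)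
      exact Set.ncard_le_ncard_of_injOn f hmaps hinj (Set.toFinite _)
    have h4 : PM.ncard + 1 ≤ typeCount M₂ σ := by
      have := h.cnt σ; omega
    have h5 : ∃ b : Fin n, M₂ b = σ ∧ b ∉ PM' := by
      by_contra hb
      push_neg at hb
      have hsub : {p : Fin n | M₂ p = σ} ⊆ PM' := fun p hpσ => hb p hpσ
      have := Set.ncard_le_ncard hsub (Set.toFinite _)
      have : typeCount M₂ σ ≤ PM'.ncard := this
      omega
    obtain ⟨b, hbσ, hbPM'⟩ := h5
    refine ⟨b, ?_, ?_, hcnt⟩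
    · intro z hz
      by_cases hzx : z = x
      · subst hzx; simp only [Function.update_self]; rw [hbσ]
      · simp only [Function.update_of_ne hzx]
        exact h.tp z ((Finset.mem_insert.mp hz).resolve_left hzx)
    · have key : ∀ w ∈ F, w ≠ x → (a ≠ s₁ w ∧ b ≠ s₂ w) := by
        intro w hw hwx
        refine ⟨fun hwa => hp w hw hwx hwa.symm, fun hwb => ?_⟩
        exact hbPM' ⟨hbσ, w, hw, hwx, hwb.symm⟩
      intro z hz w hw
      by_cases hzx : z = x <;> by_cases hwx : w = x
      · subst hzx; subst hwx; simp
      · subst hzx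
        have hw' : w ∈ F := (Finset.mem_insert.mp hw).resolve_left hwx
        simp only [Function.update_self, Function.update_of_ne hwx]
        obtain ⟨k1, k2⟩ := key w hw' hwx
        exact iff_of_false k1 k2
      · subst hwx
        have hz' : z ∈ F := (Finset.mem_insert.mp hz).resolve_left hzx
        simp only [Function.update_self, Function.update_of_ne hzx]
        obtain ⟨k1, k2⟩ := key z hz' hzx
        exact iff_of_false (fun hh => k1 hh.symm) (fun hh => k2 hh.symm)
      · simp only [Function.update_of_ne hzx, Function.update_of_ne hwx]
        exact h.eqv z ((Finset.mem_insert.mp hz).resolve_left hzx)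
          w ((Finset.mem_insert.mp hw).resolve_left hwx)

end QLB

-- main lemma (appended to aux for testing)
section QLB2
variable {τ : Type} {n : ℕ}

lemma qinv_sat_iff (M₁ M₂ : UModel τ n) : ∀ (φ : FO τ) (d : ℕ) (F : Finset ℕ)
    (s₁ s₂ : ℕ → Fin n), φ.qcount ≤ d → φ.freeVars ⊆ F →
    QInv M₁ M₂ d F s₁ s₂ → (FO.sat M₁ s₁ φ ↔ FO.sat M₂ s₂ φ) := by
  intro φ
  induction φ with
  | eq x y =>
    intro d F s₁ s₂ _ hF h
    have hx : x ∈ F := hF (by simp [FO.freeVars])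
    have hy : y ∈ F := hF (by simp [FO.freeVars])
    simpa [FO.sat] using h.eqv x hx y hy
  | ne x y =>
    intro d F s₁ s₂ _ hF h
    have hx : x ∈ F := hF (by simp [FO.freeVars])
    have hy : y ∈ F := hF (by simp [FO.freeVars])
    simpa [FO.sat] using not_congr (h.eqv x hx y hy)
  | pos P x =>
    intro d F s₁ s₂ _ hF h
    have hx : x ∈ F := hF (by simp [FO.freeVars])
    simp only [FO.sat, h.tp x hx]
  | npos P x =>
    intro d F s₁ s₂ _ hF h
    have hx : x ∈ F := hF (by simp [FO.freeVars])
    simp only [FO.sat, h.tp x hx]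
  | and ψ χ ihψ ihχ =>
    intro d F s₁ s₂ hd hF h
    have hdψ : ψ.qcount ≤ d := by simp [FO.qcount] at hd; omega
    have hdχ : χ.qcount ≤ d := by simp [FO.qcount] at hd; omega
    have hFψ : ψ.freeVars ⊆ F := fun z hz => hF (by simp [FO.freeVars]; exact Or.inl hz)
    have hFχ : χ.freeVars ⊆ F := fun z hz => hF (by simp [FO.freeVars]; exact Or.inr hz)
    simp only [FO.sat]
    exact and_congr (ihψ d F s₁ s₂ hdψ hFψ h) (ihχ d F s₁ s₂ hdχ hFχ h)
  | or ψ χ ihψ ihχ =>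
    intro d F s₁ s₂ hd hF h
    have hdψ : ψ.qcount ≤ d := by simp [FO.qcount] at hd; omega
    have hdχ : χ.qcount ≤ d := by simp [FO.qcount] at hd; omega
    have hFψ : ψ.freeVars ⊆ F := fun z hz => hF (by simp [FO.freeVars]; exact Or.inl hz)
    have hFχ : χ.freeVars ⊆ F := fun z hz => hF (by simp [FO.freeVars]; exact Or.inr hz)
    simp only [FO.sat]
    exact or_congr (ihψ d F s₁ s₂ hdψ hFψ h) (ihχ d F s₁ s₂ hdχ hFχ h)
  | ex x ψ ih =>
    intro d F s₁ s₂ hd hF h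
    have hd1 : ψ.qcount + 1 ≤ d := by simpa [FO.qcount] using hd
    obtain ⟨d', rfl⟩ : ∃ d', d = d' + 1 := ⟨d - 1, by omega⟩
    have hFψ : ψ.freeVars ⊆ insert x F := by
      intro z hz
      by_cases hzx : z = x
      · simp [hzx]
      · exact Finset.mem_insert_of_mem (hF (by simp [FO.freeVars, hz, hzx]))
    simp only [FO.sat]
    constructor
    · rintro ⟨a, ha⟩
      obtain ⟨b, hb⟩ := h.extend x a
      exact ⟨b, (ih d' (insert x F) _ _ (by omega) hFψ hb).mp ha⟩
    · rintro ⟨b, hb⟩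
      obtain ⟨a, hab⟩ := h.symm.extend x b
      exact ⟨a, (ih d' (insert x F) _ _ (by omega) hFψ hab.symm).mpr hb⟩
  | all x ψ ih =>
    intro d F s₁ s₂ hd hF h
    have hd1 : ψ.qcount + 1 ≤ d := by simpa [FO.qcount] using hd
    obtain ⟨d', rfl⟩ : ∃ d', d = d' + 1 := ⟨d - 1, by omega⟩
    have hFψ : ψ.freeVars ⊆ insert x F := by
      intro z hz
      by_cases hzx : z = x
      · simp [hzx]
      · exact Finset.mem_insert_of_mem (hF (by simp [FO.freeVars, hz, hzx]))
    simp only [FO.sat]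
    constructor
    · intro hall b
      obtain ⟨a, hab⟩ := h.symm.extend x b
      exact (ih d' (insert x F) _ _ (by omega) hFψ hab.symm).mp (hall a)
    · intro hall a
      obtain ⟨b, hb⟩ := h.extend x a
      exact (ih d' (insert x F) _ _ (by omega) hFψ hb).mpr (hall b)

end QLB2

/-- Let `π 0, …, π (ℓ-1)` (with `ℓ ≥ 2`) enumerate the `τ`-types realized
in the size-`n` model `M` in ascending order of numbers of realizing points, and let `M'`
be obtained from `M` by changing the type of one point `a` from `π_{ℓ-1}` (i.e. `π ⟨ℓ-2⟩`)
to `π_ℓ` (i.e. `π ⟨ℓ-1⟩`). Then every FO[τ] sentence `φ` with `M ⊨ φ` and `M' ⊭ φ`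
contains at least `|π_{ℓ-1}|_M` quantifier occurrences. -/



theorem quantifier_lower_bound (τ : Type) [Fintype τ] {n ℓ : ℕ} (hℓ : 2 ≤ ℓ)
    (M M' : UModel τ n) (π : Fin ℓ → Set τ)
    (hinj : Function.Injective π)
    (hreal : ∀ i, 0 < typeCount M (π i))
    (hall : ∀ σ : Set τ, 0 < typeCount M σ → ∃ i, σ = π i)
    (hasc : Monotone fun i => typeCount M (π i))
    (a : Fin n) (ha : M a = π ⟨ℓ - 2, by omega⟩)
    (hM'a : M' a = π ⟨ℓ - 1, by omega⟩)
    (hM' : ∀ b : Fin n, b ≠ a → M' b = M b)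
    (φ : FO τ) (hsent : φ.IsSentence)
    (hMφ : Sat M φ) (hM'φ : ¬ Sat M' φ) :
    typeCount M (π ⟨ℓ - 2, by omega⟩) ≤ φ.qcount := by
  classical
  by_contra hq
  push_neg at hq
  obtain ⟨i, hi⟩ : ∃ i : Fin ℓ, i = (⟨ℓ - 2, by omega⟩ : Fin ℓ) := ⟨_, rfl⟩
  obtain ⟨j, hj⟩ : ∃ j : Fin ℓ, j = (⟨ℓ - 1, by omega⟩ : Fin ℓ) := ⟨_, rfl⟩
  rw [← hi] at ha hq
  rw [← hj] at hM'a
  have hij : π i ≠ π j := fun heq => by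
    have := hinj heq
    rw [hi, hj] at this
    simp only [Fin.mk.injEq] at this
    omega
  have hijle : typeCount M (π i) ≤ typeCount M (π j) :=
    hasc (a := i) (b := j) (by rw [hi, hj]; exact Fin.mk_le_mk.mpr (by omega))
  -- type counts in M'
  have hseti : {b : Fin n | M' b = π i} = {b : Fin n | M b = π i} \ {a} := by
    ext b
    simp only [Set.mem_setOf_eq, Set.mem_diff, Set.mem_singleton_iff]
    constructor
    · intro hb
      have hba : b ≠ a := fun h => hij (by rw [← hb, h, hM'a])
      exact ⟨by rw [← hM' b hba]; exact hb, hba⟩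
    · rintro ⟨hb, hba⟩; rw [hM' b hba]; exact hb
  have hsetj : {b : Fin n | M' b = π j} = insert a {b : Fin n | M b = π j} := by
    ext b
    simp only [Set.mem_setOf_eq, Set.mem_insert_iff]
    constructor
    · intro hb
      by_cases hba : b = a
      · exact Or.inl hba
      · exact Or.inr (by rw [← hM' b hba]; exact hb)
    · rintro (rfl | hb)
      · exact hM'a
      · have hba : b ≠ a := fun h => hij (by rw [← hb, h, ha])
        rw [hM' b hba]; exact hb
  have hcnti : typeCount M' (π i) = typeCount M (π i) - 1 :=
    (congrArg Set.ncard hseti).trans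
      (Set.ncard_diff_singleton_of_mem (s := {b : Fin n | M b = π i}) ha)
  have hcntj : typeCount M' (π j) = typeCount M (π j) + 1 :=
    (congrArg Set.ncard hsetj).trans
      (Set.ncard_insert_of_notMem (by simp [ha, hij]) (Set.toFinite _))
  have hcnto : ∀ σ : Set τ, σ ≠ π i → σ ≠ π j → typeCount M' σ = typeCount M σ := by
    intro σ hσi hσj
    unfold typeCount
    congr 1
    ext b
    simp only [Set.mem_setOf_eq]
    by_cases hba : b = a
    · subst hba
      rw [hM'a, ha]
      exact iff_of_false (fun h => hσj h.symm) (fun h => hσi h.symm)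
    · rw [hM' b hba]
  -- build the invariant with F = ∅ and conclude
  have hcnt : ∀ σ : Set τ, min (typeCount M σ) (φ.qcount + (∅ : Finset ℕ).card)
      = min (typeCount M' σ) (φ.qcount + (∅ : Finset ℕ).card) := by
    intro σ
    simp only [Finset.card_empty, Nat.add_zero]
    by_cases hσi : σ = π i
    · subst hσi; rw [hcnti]; omega
    · by_cases hσj : σ = π j
      · subst hσj; rw [hcntj]; omega
      · rw [hcnto σ hσi hσj]
  have hiff : ∀ s : ℕ → Fin n, FO.sat M s φ ↔ FO.sat M' s φ := by
    intro s
    exact qinv_sat_iff M M' φ φ.qcount ∅ s s le_rfl (by rw [hsent])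
      ⟨by simp, by simp, hcnt⟩
  exact hM'φ (fun s => (hiff s).mp (hMφ s))
end
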